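/- arXiv:1908.01433 — 7 statements merged into one kernel-verified Lean document; each statement's English description precedes it below -/
import Mathlib

section
/- Let r ≥ 2 be an even integer, let k ≥ r be an integer and p ≥ r be a real number. If G_w is a weighted k-partite r-graph (with at least one edge of nonzero weight), then λ^(p)(G_w) / λ_min^(p)(G_w) ≥ λ^(p)(K_k^r) / λ_min^(p)(K_k^r). -/
open Finset

/-- Polynomial form of a weighted `r`-graph with edge set `E` and weights `w`:
`P(x) = r! * ∑_{e ∈ E} w(e) * ∏_{i ∈ e} x i`. -/
noncomputable def polyForm (r : ℕ) {V : Type*} (E : Finset (Finset V))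
    (w : Finset V → ℝ) (x : V → ℝ) : ℝ :=
  (r.factorial : ℝ) * ∑ e ∈ E, w e * ∏ i ∈ e, x i

/-- The ℓ^p norm of a vector. -/
noncomputable def lpNorm (p : ℝ) {V : Type*} [Fintype V] (x : V → ℝ) : ℝ :=
  (∑ i, |x i| ^ p) ^ (1 / p)

/-- `λ^(p)(G_w)`: the maximum of the polynomial form over the unit ℓ^p sphere. -/
noncomputable def lamMax (r : ℕ) (p : ℝ) {V : Type*} [Fintype V]
    (E : Finset (Finset V)) (w : Finset V → ℝ) : ℝ :=
  sSup {t | ∃ x : V → ℝ, lpNorm p x = 1 ∧ polyForm r E w x = t}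

/-- `λ_min^(p)(G_w)`: the minimum of the polynomial form over the unit ℓ^p sphere. -/
noncomputable def lamMin (r : ℕ) (p : ℝ) {V : Type*} [Fintype V]
    (E : Finset (Finset V)) (w : Finset V → ℝ) : ℝ :=
  sInf {t | ∃ x : V → ℝ, lpNorm p x = 1 ∧ polyForm r E w x = t}

/-- Edge set of the complete `r`-graph `K_k^r` on vertex set `Fin k`. -/
def completeEdges (r k : ℕ) : Finset (Finset (Fin k)) :=
  Finset.univ.powersetCard r

namespace HoffmanAux


lemma image_mem_completeEdges {k r : ℕ} (T : Finset (Fin k)) (hT : T.card = r)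
    (σ : Equiv.Perm (Fin k)) : T.image ⇑σ ∈ completeEdges r k := by
  rw [completeEdges, Finset.mem_powersetCard]
  exact ⟨Finset.subset_univ _, by rw [Finset.card_image_of_injective _ σ.injective, hT]⟩

lemma exists_perm_image {k : ℕ} {T1 T2 : Finset (Fin k)} (h : T1.card = T2.card) :
    ∃ π : Equiv.Perm (Fin k), T1.image ⇑π = T2 := by
  classical
  let e : {x // x ∈ T1} ≃ {x // x ∈ T2} := Finset.equivOfCardEq h
  refine ⟨e.extendSubtype, Finset.eq_of_subset_of_card_le ?_ ?_⟩
  · intro a ha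
    obtain ⟨b, hb, rfl⟩ := Finset.mem_image.mp ha
    rw [Equiv.extendSubtype_apply_of_mem e b hb]
    exact (e ⟨b, hb⟩).2
  · rw [Finset.card_image_of_injective _ e.extendSubtype.injective, h]

lemma sum_perm_image {k : ℕ} (r : ℕ) (T : Finset (Fin k)) (hT : T.card = r)
    (f : Finset (Fin k) → ℝ) :
    (k.choose r : ℝ) * ∑ σ : Equiv.Perm (Fin k), f (T.image ⇑σ) =
      (k.factorial : ℝ) * ∑ T' ∈ completeEdges r k, f T' := by
  classical
  have hmaps : ∀ σ ∈ (univ : Finset (Equiv.Perm (Fin k))), T.image ⇑σ ∈ completeEdges r k :=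
    fun σ _ => image_mem_completeEdges T hT σ
  have hTmem : T ∈ completeEdges r k := by
    rw [completeEdges, Finset.mem_powersetCard]; exact ⟨Finset.subset_univ _, hT⟩
  set c := (univ.filter fun σ : Equiv.Perm (Fin k) => T.image ⇑σ = T).card with hc
  have hcard : ∀ T' ∈ completeEdges r k,
      (univ.filter fun σ : Equiv.Perm (Fin k) => T.image ⇑σ = T').card = c := by
    intro T' hT'
    have hT'c : T'.card = T.card := by
      rw [hT, (Finset.mem_powersetCard.mp hT').2]
    obtain ⟨π, hπ⟩ := exists_perm_image hT'c
    refine Finset.card_equiv (Equiv.mulLeft π) fun σ => ?_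
    simp only [Finset.mem_filter, Finset.mem_univ, true_and]
    constructor
    · intro h
      have : T.image ⇑(π * σ) = (T.image ⇑σ).image ⇑π := by
        rw [Finset.image_image]; rfl
      rw [Equiv.coe_mulLeft] at *
      rw [this, h, hπ]
    · intro h
      have himg : T.image ⇑(π * σ) = (T.image ⇑σ).image ⇑π := by
        rw [Finset.image_image]; rfl
      rw [Equiv.coe_mulLeft] at h
      rw [himg] at h
      exact Finset.image_injective π.injective (h.trans hπ.symm)
  have htot : ∑ T' ∈ completeEdges r k,
      (univ.filter fun σ : Equiv.Perm (Fin k) => T.image ⇑σ = T').card = k.factorial := by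
    rw [← Finset.card_eq_sum_card_fiberwise hmaps, Finset.card_univ, Fintype.card_perm,
      Fintype.card_fin]
  have hcc : (completeEdges r k).card * c = k.factorial := by
    rw [← htot, Finset.sum_congr rfl hcard, Finset.sum_const, smul_eq_mul]
  have hcardCE : (completeEdges r k).card = k.choose r := by
    rw [completeEdges, Finset.card_powersetCard, Finset.card_univ, Fintype.card_fin]
  have hsum : ∑ σ : Equiv.Perm (Fin k), f (T.image ⇑σ)
      = ∑ T' ∈ completeEdges r k, (c : ℝ) * f T' := by
    rw [← Finset.sum_fiberwise_of_maps_to' hmaps f]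
    refine Finset.sum_congr rfl fun T' hT' => ?_
    rw [Finset.sum_const, hcard T' hT', nsmul_eq_mul]
  rw [hsum]
  have : ∑ T' ∈ completeEdges r k, (c : ℝ) * f T' = (c:ℝ) * ∑ T' ∈ completeEdges r k, f T' :=
    (Finset.mul_sum _ _ _).symm
  rw [this, ← mul_assoc]
  have : (k.choose r : ℝ) * c = k.factorial := by
    rw [← hcardCE, ← hcc]; push_cast; ring
  rw [this]

lemma sum_perm_apply {k : ℕ} (j : Fin k) (g : Fin k → ℝ) :
    (k : ℝ) * ∑ σ : Equiv.Perm (Fin k), g (σ j) = (k.factorial : ℝ) * ∑ v, g v := by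
  classical
  have h := sum_perm_image 1 {j} (Finset.card_singleton j) (fun s => ∑ v ∈ s, g v)
  simp only [Finset.image_singleton, Finset.sum_singleton, Nat.choose_one_right] at h
  rw [h]
  congr 1
  rw [completeEdges, Finset.powersetCard_one, Finset.sum_map]
  simp



variable {V : Type*} [Fintype V] {p : ℝ}

lemma sum_rpow_eq_one (hp : 0 < p) {x : V → ℝ} (h : lpNorm p x = 1) :
    ∑ i, |x i| ^ p = 1 := by
  have h0 : (0:ℝ) ≤ ∑ i, |x i| ^ p :=
    Finset.sum_nonneg fun i _ => Real.rpow_nonneg (abs_nonneg _) _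
  unfold lpNorm at h
  calc ∑ i, |x i| ^ p = (∑ i, |x i| ^ p) ^ ((1/p) * p) := by
        rw [one_div, inv_mul_cancel₀ hp.ne', Real.rpow_one]
    _ = ((∑ i, |x i| ^ p) ^ (1/p)) ^ p := Real.rpow_mul h0 _ _
    _ = 1 ^ p := by rw [h]
    _ = 1 := Real.one_rpow p

lemma lpNorm_eq_one_of (hp : 0 < p) {x : V → ℝ} (h : ∑ i, |x i| ^ p = 1) :
    lpNorm p x = 1 := by
  unfold lpNorm
  rw [h, Real.one_rpow]

lemma abs_le_one (hp : 0 < p) {x : V → ℝ} (h : lpNorm p x = 1) (i : V) : |x i| ≤ 1 := by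
  have hs := sum_rpow_eq_one hp h
  have hle : |x i| ^ p ≤ 1 := by
    rw [← hs]
    exact Finset.single_le_sum (fun j _ => Real.rpow_nonneg (abs_nonneg _) _) (Finset.mem_univ i)
  by_contra h1
  push_neg at h1
  have : (1:ℝ) ^ p < |x i| ^ p := Real.rpow_lt_rpow (by norm_num) h1 hp
  rw [Real.one_rpow] at this
  linarith

lemma continuous_lpNorm (hp : 0 < p) : Continuous (fun x : V → ℝ => lpNorm p x) := by
  unfold lpNorm
  refine Continuous.rpow_const ?_ fun _ => Or.inr (by positivity)
  exact continuous_finset_sum _ fun i _ =>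
    ((continuous_apply i).abs).rpow_const fun _ => Or.inr hp.le

lemma continuous_polyForm (r : ℕ) (E : Finset (Finset V)) (w : Finset V → ℝ) :
    Continuous (polyForm r E w) := by
  unfold polyForm
  exact continuous_const.mul <| continuous_finset_sum _ fun e _ =>
    continuous_const.mul <| continuous_finset_prod e fun i _ => continuous_apply i

lemma isCompact_setOf (hp : 0 < p) (r : ℕ) (E : Finset (Finset V)) (w : Finset V → ℝ) :
    IsCompact {t | ∃ x : V → ℝ, lpNorm p x = 1 ∧ polyForm r E w x = t} := by
  have hset : {t | ∃ x : V → ℝ, lpNorm p x = 1 ∧ polyForm r E w x = t}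
      = polyForm r E w '' {x | lpNorm p x = 1} := by
    ext t
    simp only [Set.mem_setOf_eq, Set.mem_image]
  rw [hset]
  refine IsCompact.image ?_ (continuous_polyForm r E w)
  refine IsCompact.of_isClosed_subset (isCompact_closedBall (0 : V → ℝ) 1) ?_ ?_
  · exact isClosed_eq (continuous_lpNorm hp) continuous_const
  · intro x hx
    rw [Metric.mem_closedBall, dist_zero_right, pi_norm_le_iff_of_nonneg zero_le_one]
    intro i
    rw [Real.norm_eq_abs]
    exact abs_le_one hp hx i

lemma exists_unit (hp : 0 < p) [Nonempty V] : ∃ x : V → ℝ, lpNorm p x = 1 := by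
  classical
  obtain ⟨i₀⟩ := ‹Nonempty V›
  refine ⟨fun i => if i = i₀ then 1 else 0, lpNorm_eq_one_of hp ?_⟩
  have : ∀ i : V, |if i = i₀ then (1:ℝ) else 0| ^ p = if i = i₀ then 1 else 0 := by
    intro i
    split_ifs
    · simp [Real.one_rpow]
    · simp [Real.zero_rpow hp.ne']
  rw [Finset.sum_congr rfl fun i _ => this i, Finset.sum_ite_eq' Finset.univ i₀ (fun _ => (1:ℝ))]
  simp

lemma setOf_nonempty (hp : 0 < p) [Nonempty V] (r : ℕ) (E : Finset (Finset V))
    (w : Finset V → ℝ) :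
    {t | ∃ x : V → ℝ, lpNorm p x = 1 ∧ polyForm r E w x = t}.Nonempty := by
  obtain ⟨x, hx⟩ := exists_unit (V := V) hp
  exact ⟨polyForm r E w x, x, hx, rfl⟩

lemma exists_lamMax (hp : 0 < p) [Nonempty V] (r : ℕ) (E : Finset (Finset V))
    (w : Finset V → ℝ) :
    ∃ x : V → ℝ, lpNorm p x = 1 ∧ polyForm r E w x = lamMax r p E w :=
  (isCompact_setOf hp r E w).sSup_mem (setOf_nonempty hp r E w)

lemma exists_lamMin (hp : 0 < p) [Nonempty V] (r : ℕ) (E : Finset (Finset V))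
    (w : Finset V → ℝ) :
    ∃ x : V → ℝ, lpNorm p x = 1 ∧ polyForm r E w x = lamMin r p E w :=
  (isCompact_setOf hp r E w).sInf_mem (setOf_nonempty hp r E w)

lemma le_lamMax (hp : 0 < p) (r : ℕ) (E : Finset (Finset V)) (w : Finset V → ℝ)
    {x : V → ℝ} (hx : lpNorm p x = 1) : polyForm r E w x ≤ lamMax r p E w :=
  le_csSup (isCompact_setOf hp r E w).bddAbove ⟨x, hx, rfl⟩

lemma lamMin_le (hp : 0 < p) (r : ℕ) (E : Finset (Finset V)) (w : Finset V → ℝ)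
    {x : V → ℝ} (hx : lpNorm p x = 1) : lamMin r p E w ≤ polyForm r E w x :=
  csInf_le (isCompact_setOf hp r E w).bddBelow ⟨x, hx, rfl⟩



variable {V : Type*} [Fintype V] [DecidableEq V] {p : ℝ}

lemma lpNorm_indicator (hp : 0 < p) {s : Finset V} (hs : s.Nonempty)
    (ε : V → ℝ) (hε : ∀ i ∈ s, |ε i| = 1) :
    lpNorm p (fun i => if i ∈ s then ε i * (s.card : ℝ) ^ (-(1:ℝ)/p) else 0) = 1 := by
  have hcard : (0:ℝ) < s.card := by exact_mod_cast Finset.card_pos.mpr hs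
  have hρ : (0:ℝ) < (s.card:ℝ) ^ (-(1:ℝ)/p) := Real.rpow_pos_of_pos hcard _
  apply lpNorm_eq_one_of hp
  have key : ∀ i, |if i ∈ s then ε i * (s.card : ℝ) ^ (-(1:ℝ)/p) else 0| ^ p
      = if i ∈ s then ((s.card:ℝ))⁻¹ else 0 := by
    intro i
    split_ifs with h
    · rw [abs_mul, hε i h, one_mul, abs_of_pos hρ, ← Real.rpow_mul hcard.le,
        div_mul_cancel₀ _ hp.ne', Real.rpow_neg_one]
    · simp [Real.zero_rpow hp.ne']
  rw [Finset.sum_congr rfl fun i _ => key i, Finset.sum_ite_mem, Finset.univ_inter,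
    Finset.sum_const, nsmul_eq_mul]
  field_simp

lemma polyForm_indicator {r : ℕ} {E : Finset (Finset V)} {w : Finset V → ℝ}
    (hunif : ∀ e ∈ E, e.card = r) {e₀ : Finset V} (he₀ : e₀ ∈ E) (x : V → ℝ)
    (hx : ∀ i, i ∉ e₀ → x i = 0) :
    polyForm r E w x = (r.factorial : ℝ) * (w e₀ * ∏ i ∈ e₀, x i) := by
  unfold polyForm
  congr 1
  apply Finset.sum_eq_single_of_mem e₀ he₀
  intro e he hne
  have hsub : ¬ e ⊆ e₀ := fun hsub =>
    hne (Finset.eq_of_subset_of_card_le hsub (by rw [hunif e he, hunif e₀ he₀]))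
  obtain ⟨i, hie, hie₀⟩ := Finset.not_subset.mp hsub
  rw [Finset.prod_eq_zero hie (hx i hie₀), mul_zero]

lemma exists_plusminus {r : ℕ} (hr : 0 < r) (hp : 0 < p)
    {E : Finset (Finset V)} {w : Finset V → ℝ}
    (hunif : ∀ e ∈ E, e.card = r) {e₀ : Finset V} (he₀ : e₀ ∈ E) (hw₀ : w e₀ ≠ 0) :
    ∃ v : ℝ, v ≠ 0 ∧ (∃ x : V → ℝ, lpNorm p x = 1 ∧ polyForm r E w x = v) ∧
      (∃ x : V → ℝ, lpNorm p x = 1 ∧ polyForm r E w x = -v) := by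
  have hcardr : e₀.card = r := hunif e₀ he₀
  have hne : e₀.Nonempty := Finset.card_pos.mp (by rw [hcardr]; exact hr)
  obtain ⟨i₀, hi₀⟩ := hne
  have hcard : (0:ℝ) < e₀.card := by
    exact_mod_cast Finset.card_pos.mpr ⟨i₀, hi₀⟩
  set ρ : ℝ := (e₀.card : ℝ) ^ (-(1:ℝ)/p) with hρdef
  have hρ : 0 < ρ := Real.rpow_pos_of_pos hcard _
  set xp : V → ℝ := fun i => if i ∈ e₀ then (1:ℝ) * ρ else 0 with hxp
  set xm : V → ℝ := fun i => if i ∈ e₀ then (if i = i₀ then -1 else 1) * ρ else 0 with hxm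
  have hxp1 : lpNorm p xp = 1 := lpNorm_indicator hp ⟨i₀, hi₀⟩ _ (fun i _ => by norm_num)
  have hxm1 : lpNorm p xm = 1 := by
    refine lpNorm_indicator hp ⟨i₀, hi₀⟩ _ (fun i _ => ?_)
    split_ifs <;> norm_num
  have hxpval : ∀ i ∈ e₀, xp i = ρ := fun i hi => by rw [hxp]; simp [hi]
  have hprodp : ∏ i ∈ e₀, xp i = ρ ^ e₀.card := by
    rw [Finset.prod_congr rfl hxpval, Finset.prod_const]
  have hprodm : ∏ i ∈ e₀, xm i = -∏ i ∈ e₀, xp i := by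
    rw [← Finset.mul_prod_erase e₀ xm hi₀, ← Finset.mul_prod_erase e₀ xp hi₀]
    have h1 : ∏ i ∈ e₀.erase i₀, xm i = ∏ i ∈ e₀.erase i₀, xp i := by
      refine Finset.prod_congr rfl fun i hi => ?_
      rw [Finset.mem_erase] at hi
      rw [hxm, hxp]
      simp [hi.1, hi.2]
    have h2 : xm i₀ = -xp i₀ := by rw [hxm, hxp]; simp [hi₀]
    rw [h1, h2, neg_mul]
  have hvp : polyForm r E w xp = (r.factorial : ℝ) * (w e₀ * ρ ^ e₀.card) := by
    rw [polyForm_indicator hunif he₀ xp (fun i hi => by rw [hxp]; simp [hi]), hprodp]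
  have hvm : polyForm r E w xm = -((r.factorial : ℝ) * (w e₀ * ρ ^ e₀.card)) := by
    rw [polyForm_indicator hunif he₀ xm (fun i hi => by rw [hxm]; simp [hi]), hprodm, hprodp]
    ring
  refine ⟨(r.factorial : ℝ) * (w e₀ * ρ ^ e₀.card), ?_, ⟨xp, hxp1, hvp⟩, ⟨xm, hxm1, hvm⟩⟩
  have h1 : (0:ℝ) < r.factorial := by exact_mod_cast Nat.factorial_pos r
  have h2 : ρ ^ e₀.card ≠ 0 := pow_ne_zero _ hρ.ne'
  exact mul_ne_zero h1.ne' (mul_ne_zero hw₀ h2)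

lemma lamMax_pos {r : ℕ} (hr : 0 < r) (hp : 0 < p) [Nonempty V]
    {E : Finset (Finset V)} {w : Finset V → ℝ}
    (hunif : ∀ e ∈ E, e.card = r) {e₀ : Finset V} (he₀ : e₀ ∈ E) (hw₀ : w e₀ ≠ 0) :
    0 < lamMax r p E w := by
  obtain ⟨v, hv, ⟨x1, hx1, hv1⟩, ⟨x2, hx2, hv2⟩⟩ := exists_plusminus hr hp hunif he₀ hw₀
  have h1 : v ≤ lamMax r p E w := hv1 ▸ le_lamMax hp r E w hx1
  have h2 : -v ≤ lamMax r p E w := hv2 ▸ le_lamMax hp r E w hx2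
  rcases abs_cases v with ⟨h, _⟩ | ⟨h, _⟩
  · calc (0:ℝ) < |v| := abs_pos.mpr hv
      _ = v := h
      _ ≤ _ := h1
  · calc (0:ℝ) < |v| := abs_pos.mpr hv
      _ = -v := h
      _ ≤ _ := h2

lemma lamMin_neg {r : ℕ} (hr : 0 < r) (hp : 0 < p) [Nonempty V]
    {E : Finset (Finset V)} {w : Finset V → ℝ}
    (hunif : ∀ e ∈ E, e.card = r) {e₀ : Finset V} (he₀ : e₀ ∈ E) (hw₀ : w e₀ ≠ 0) :
    lamMin r p E w < 0 := by
  obtain ⟨v, hv, ⟨x1, hx1, hv1⟩, ⟨x2, hx2, hv2⟩⟩ := exists_plusminus hr hp hunif he₀ hw₀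
  have h1 : lamMin r p E w ≤ v := hv1 ▸ lamMin_le hp r E w hx1
  have h2 : lamMin r p E w ≤ -v := hv2 ▸ lamMin_le hp r E w hx2
  rcases abs_cases v with ⟨h, _⟩ | ⟨h, _⟩
  · have : 0 < v := by rw [← h]; exact abs_pos.mpr hv
    linarith
  · have : 0 < -v := by rw [← h]; exact abs_pos.mpr hv
    linarith

lemma lamMaxK_ge {r k : ℕ} (hp : 0 < p) (hk : 0 < k) :
    (r.factorial : ℝ) * (k.choose r : ℝ) * ((k:ℝ)⁻¹) ^ ((r:ℝ)/p) ≤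
      lamMax r p (completeEdges r k) (fun _ => (1:ℝ)) := by
  have : Nonempty (Fin k) := Fin.pos_iff_nonempty.mp hk
  have hkR : (0:ℝ) < k := by exact_mod_cast hk
  set u : Fin k → ℝ := fun _ => (k:ℝ) ^ (-(1:ℝ)/p) with hu
  have hρ : (0:ℝ) < (k:ℝ) ^ (-(1:ℝ)/p) := Real.rpow_pos_of_pos hkR _
  have hnorm : lpNorm p u = 1 := by
    apply lpNorm_eq_one_of hp
    have key : ∀ i : Fin k, |u i| ^ p = ((k:ℝ))⁻¹ := by
      intro i
      rw [hu]
      rw [abs_of_pos hρ, ← Real.rpow_mul hkR.le, div_mul_cancel₀ _ hp.ne', Real.rpow_neg_one]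
    rw [Finset.sum_congr rfl fun i _ => key i, Finset.sum_const, Finset.card_univ,
      Fintype.card_fin, nsmul_eq_mul]
    field_simp
  have hval : polyForm r (completeEdges r k) (fun _ => (1:ℝ)) u
      = (r.factorial : ℝ) * ((k.choose r : ℝ) * ((k:ℝ)⁻¹) ^ ((r:ℝ)/p)) := by
    unfold polyForm
    congr 1
    have key : ∀ T' ∈ completeEdges r k, (1:ℝ) * ∏ t ∈ T', u t = ((k:ℝ)⁻¹) ^ ((r:ℝ)/p) := by
      intro T' hT'
      have hc : T'.card = r := (Finset.mem_powersetCard.mp hT').2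
      rw [one_mul, Finset.prod_const, hc, ← Real.rpow_natCast ((k:ℝ) ^ (-(1:ℝ)/p)) r,
        ← Real.rpow_mul hkR.le, Real.inv_rpow hkR.le, ← Real.rpow_neg hkR.le]
      congr 1
      ring
    rw [Finset.sum_congr rfl key, Finset.sum_const, nsmul_eq_mul]
    congr 1
    rw [completeEdges, Finset.card_powersetCard, Finset.card_univ, Fintype.card_fin]
  calc (r.factorial : ℝ) * (k.choose r : ℝ) * ((k:ℝ)⁻¹) ^ ((r:ℝ)/p)
      = polyForm r (completeEdges r k) (fun _ => (1:ℝ)) u := by rw [hval]; ring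
    _ ≤ _ := le_lamMax hp r (completeEdges r k) _ hnorm


end HoffmanAux

set_option maxHeartbeats 1000000 in
/-- **Theorem 1 (inequality part).** Let `r ≥ 2` be even, `k ≥ r`, and `p ≥ r`.
If `G_w` is a weighted `k`-partite `r`-graph with at least one edge of nonzero
weight, then `λ^(p)(G_w)/λ_min^(p)(G_w) ≥ λ^(p)(K_k^r)/λ_min^(p)(K_k^r)`. -/
theorem hoffman_hypergraph (r k n : ℕ) (p : ℝ)
    (hr2 : 2 ≤ r) (hre : Even r) (hkr : r ≤ k) (hp : (r : ℝ) ≤ p)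
    (E : Finset (Finset (Fin n))) (w : Finset (Fin n) → ℝ)
    (hunif : ∀ e ∈ E, e.card = r)
    (hpart : ∃ η : Fin n → Fin k, ∀ e ∈ E, Set.InjOn η (e : Set (Fin n)))
    (hw : ∃ e ∈ E, w e ≠ 0) :
    lamMax r p E w / lamMin r p E w ≥
      lamMax r p (completeEdges r k) (fun _ => 1) /
        lamMin r p (completeEdges r k) (fun _ => 1) := by
  classical
  obtain ⟨η, hη⟩ := hpart
  obtain ⟨e₀, he₀, hw₀⟩ := hw
  have hr0 : 0 < r := by omega
  have hrR : (0:ℝ) < r := by exact_mod_cast hr0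
  have hp0 : (0:ℝ) < p := lt_of_lt_of_le hrR hp
  have hk0 : 0 < k := lt_of_lt_of_le hr0 hkr
  have hkR : (0:ℝ) < k := by exact_mod_cast hk0
  have hne₀ : e₀.Nonempty := Finset.card_pos.mp (by rw [hunif e₀ he₀]; exact hr0)
  have hnV : Nonempty (Fin n) := ⟨hne₀.choose⟩
  have hnK : Nonempty (Fin k) := Fin.pos_iff_nonempty.mp hk0
  have hunifK : ∀ e ∈ completeEdges r k, e.card = r := fun e he =>
    (Finset.mem_powersetCard.mp he).2
  obtain ⟨T₀, hT₀sub, hT₀card⟩ := Finset.exists_subset_card_eq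
    (s := (Finset.univ : Finset (Fin k))) (n := r) (by simpa using hkr)
  have hT₀ : T₀ ∈ completeEdges r k := Finset.mem_powersetCard.mpr ⟨hT₀sub, hT₀card⟩
  obtain ⟨x, hx1, hxa⟩ := HoffmanAux.exists_lamMax hp0 r E w
  obtain ⟨y, hy1, hyd⟩ := HoffmanAux.exists_lamMin hp0 r (completeEdges r k) (fun _ => (1:ℝ))
  have ha : 0 < lamMax r p E w := HoffmanAux.lamMax_pos hr0 hp0 hunif he₀ hw₀
  have hd : lamMin r p (completeEdges r k) (fun _ => (1:ℝ)) < 0 :=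
    HoffmanAux.lamMin_neg hr0 hp0 hunifK hT₀ one_ne_zero
  have hcge := HoffmanAux.lamMaxK_ge (r := r) (k := k) (p := p) hp0 hk0
  set a := lamMax r p E w with hadef
  set b := lamMin r p E w with hbdef
  set c := lamMax r p (completeEdges r k) (fun _ => (1:ℝ)) with hcdef
  set d := lamMin r p (completeEdges r k) (fun _ => (1:ℝ)) with hddef
  set κ : ℝ := ((k:ℝ)⁻¹) ^ ((r:ℝ)/p) with hκdef
  have hκ : 0 < κ := Real.rpow_pos_of_pos (inv_pos.mpr hkR) _
  set z : Equiv.Perm (Fin k) → Fin n → ℝ := fun σ i => x i * y (σ (η i)) with hzdef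
  set Np : Equiv.Perm (Fin k) → ℝ := fun σ => ∑ i, |z σ i| ^ p with hNpdef
  have hNpnn : ∀ σ, 0 ≤ Np σ := fun σ =>
    Finset.sum_nonneg fun i _ => Real.rpow_nonneg (abs_nonneg _) _
  -- Step 1: test vectors
  have step1 : ∀ σ : Equiv.Perm (Fin k), b * Np σ ^ ((r:ℝ)/p) ≤ polyForm r E w (z σ) := by
    intro σ
    rcases (hNpnn σ).lt_or_eq with hpos | h0
    · set cc : ℝ := Np σ ^ (-(1:ℝ)/p) with hccdef
      have hcc : 0 < cc := Real.rpow_pos_of_pos hpos _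
      have hunit : lpNorm p (fun i => cc * z σ i) = 1 := by
        apply HoffmanAux.lpNorm_eq_one_of hp0
        have key : ∀ i, |cc * z σ i| ^ p = (Np σ)⁻¹ * |z σ i| ^ p := by
          intro i
          rw [abs_mul, Real.mul_rpow (abs_nonneg _) (abs_nonneg _), abs_of_pos hcc]
          congr 1
          rw [hccdef, ← Real.rpow_mul (hNpnn σ), div_mul_cancel₀ _ hp0.ne', Real.rpow_neg_one]
        rw [Finset.sum_congr rfl fun i _ => key i, ← Finset.mul_sum]
        have hfold : ∑ i, |z σ i| ^ p = Np σ := rfl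
        rw [hfold, inv_mul_cancel₀ hpos.ne']
      have hble := HoffmanAux.lamMin_le hp0 r E w hunit
      have hper : ∀ e ∈ E, w e * ∏ i ∈ e, (cc * z σ i) = cc ^ r * (w e * ∏ i ∈ e, z σ i) := by
        intro e he
        rw [Finset.prod_mul_distrib, Finset.prod_const, hunif e he]
        ring
      have hscale : polyForm r E w (fun i => cc * z σ i) = cc ^ r * polyForm r E w (z σ) := by
        unfold polyForm
        rw [Finset.sum_congr rfl hper, ← Finset.mul_sum]
        ring
      rw [hscale] at hble
      have hccr : cc ^ r = Np σ ^ (-(r:ℝ)/p) := by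
        rw [hccdef, ← Real.rpow_natCast (Np σ ^ (-(1:ℝ)/p)) r, ← Real.rpow_mul (hNpnn σ)]
        congr 1
        ring
      have hmul := mul_le_mul_of_nonneg_left hble (Real.rpow_nonneg (hNpnn σ) ((r:ℝ)/p))
      have hcancel : Np σ ^ ((r:ℝ)/p) * (cc ^ r * polyForm r E w (z σ))
          = polyForm r E w (z σ) := by
        rw [hccr, ← mul_assoc, ← Real.rpow_add hpos]
        have : (r:ℝ)/p + -(r:ℝ)/p = 0 := by ring
        rw [this, Real.rpow_zero, one_mul]
      calc b * Np σ ^ ((r:ℝ)/p) = Np σ ^ ((r:ℝ)/p) * b := by ring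
        _ ≤ Np σ ^ ((r:ℝ)/p) * (cc ^ r * polyForm r E w (z σ)) := hmul
        _ = polyForm r E w (z σ) := hcancel
    · have hz0 : ∀ i, z σ i = 0 := by
        intro i
        by_contra hne
        have h1 : 0 < |z σ i| ^ p := Real.rpow_pos_of_pos (abs_pos.mpr hne) _
        have h2 : |z σ i| ^ p ≤ Np σ :=
          Finset.single_le_sum (fun j _ => Real.rpow_nonneg (abs_nonneg _) _) (Finset.mem_univ i)
        rw [← h0] at h2
        linarith
      have hP : polyForm r E w (z σ) = 0 := by
        unfold polyForm
        rw [Finset.sum_eq_zero, mul_zero]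
        intro e he
        obtain ⟨i, hi⟩ := Finset.card_pos.mp (show 0 < e.card by rw [hunif e he]; exact hr0)
        rw [Finset.prod_eq_zero hi (hz0 i), mul_zero]
      rw [hP, ← h0, Real.zero_rpow (div_ne_zero hrR.ne' hp0.ne'), mul_zero]
  -- Eq0 : permutation sum of the norms
  have hEq0 : (k:ℝ) * ∑ σ : Equiv.Perm (Fin k), Np σ = (k.factorial : ℝ) := by
    have hsplit : ∀ σ : Equiv.Perm (Fin k), Np σ = ∑ i, |x i| ^ p * |y (σ (η i))| ^ p := by
      intro σ
      refine Finset.sum_congr rfl fun i _ => ?_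
      rw [show z σ i = x i * y (σ (η i)) from rfl, abs_mul,
        Real.mul_rpow (abs_nonneg _) (abs_nonneg _)]
    rw [Finset.sum_congr rfl fun σ _ => hsplit σ, Finset.sum_comm, Finset.mul_sum]
    have key : ∀ i : Fin n, (k:ℝ) * ∑ σ : Equiv.Perm (Fin k), |x i| ^ p * |y (σ (η i))| ^ p
        = (k.factorial:ℝ) * |x i| ^ p := by
      intro i
      rw [← Finset.mul_sum]
      have hcnt := HoffmanAux.sum_perm_apply (η i) (fun v => |y v| ^ p)
      rw [HoffmanAux.sum_rpow_eq_one hp0 hy1, mul_one] at hcnt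
      calc (k:ℝ) * (|x i| ^ p * ∑ σ : Equiv.Perm (Fin k), |y (σ (η i))| ^ p)
          = |x i| ^ p * ((k:ℝ) * ∑ σ : Equiv.Perm (Fin k), |y (σ (η i))| ^ p) := by ring
        _ = |x i| ^ p * (k.factorial:ℝ) := by rw [hcnt]
        _ = (k.factorial:ℝ) * |x i| ^ p := by ring
    rw [Finset.sum_congr rfl fun i _ => key i, ← Finset.mul_sum,
      HoffmanAux.sum_rpow_eq_one hp0 hx1, mul_one]
  -- Jensen
  set A : ℝ := ∑ σ : Equiv.Perm (Fin k), Np σ ^ ((r:ℝ)/p) with hAdef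
  have hAnn : 0 ≤ A := Finset.sum_nonneg fun σ _ => Real.rpow_nonneg (hNpnn σ) _
  have hjensen : A ≤ (k.factorial : ℝ) * κ := by
    have hFpos : (0:ℝ) < (k.factorial : ℝ) := by exact_mod_cast Nat.factorial_pos k
    have hwnn : ∀ σ ∈ (Finset.univ : Finset (Equiv.Perm (Fin k))),
        (0:ℝ) ≤ ((k.factorial : ℝ))⁻¹ := fun _ _ => by positivity
    have hw' : ∑ _σ : Equiv.Perm (Fin k), ((k.factorial : ℝ))⁻¹ = 1 := by
      rw [Finset.sum_const, Finset.card_univ, Fintype.card_perm, Fintype.card_fin, nsmul_eq_mul]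
      field_simp
    have hznn : ∀ σ ∈ (Finset.univ : Finset (Equiv.Perm (Fin k))),
        (0:ℝ) ≤ Np σ ^ ((r:ℝ)/p) := fun σ _ => Real.rpow_nonneg (hNpnn σ) _
    have hpr : (1:ℝ) ≤ p / r := (one_le_div hrR).mpr hp
    have hmean := Real.arith_mean_le_rpow_mean Finset.univ (fun _ => ((k.factorial : ℝ))⁻¹)
      (fun σ => Np σ ^ ((r:ℝ)/p)) hwnn hw' hznn hpr
    have hsimp : ∀ σ : Equiv.Perm (Fin k), (Np σ ^ ((r:ℝ)/p)) ^ (p/r) = Np σ := by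
      intro σ
      rw [← Real.rpow_mul (hNpnn σ)]
      have : (r:ℝ)/p * (p/r) = 1 := by field_simp
      rw [this, Real.rpow_one]
    have hsum : ∑ σ : Equiv.Perm (Fin k), Np σ = (k.factorial:ℝ) / k := by
      rw [eq_div_iff hkR.ne', mul_comm]
      exact hEq0
    have hRHS : (∑ σ : Equiv.Perm (Fin k),
        ((k.factorial : ℝ))⁻¹ * (Np σ ^ ((r:ℝ)/p)) ^ (p/r)) ^ (1/(p/r)) = κ := by
      have h1 : ∑ σ : Equiv.Perm (Fin k), ((k.factorial : ℝ))⁻¹ * (Np σ ^ ((r:ℝ)/p)) ^ (p/r)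
          = (k:ℝ)⁻¹ := by
        rw [Finset.sum_congr rfl fun σ _ => by rw [hsimp σ], ← Finset.mul_sum, hsum]
        field_simp
      rw [h1, one_div_div]
    have hLHS : ∑ σ : Equiv.Perm (Fin k), ((k.factorial : ℝ))⁻¹ * Np σ ^ ((r:ℝ)/p)
        = ((k.factorial : ℝ))⁻¹ * A := by
      rw [hAdef, Finset.mul_sum]
    rw [hLHS, hRHS] at hmean
    calc A = (k.factorial : ℝ) * (((k.factorial : ℝ))⁻¹ * A) := by field_simp
      _ ≤ (k.factorial : ℝ) * κ := mul_le_mul_of_nonneg_left hmean hFpos.le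
  -- Eq1 : permutation sum of the polynomial forms
  set Q : ℝ := ∑ T' ∈ completeEdges r k, ∏ t ∈ T', y t with hQdef
  set U : ℝ := ∑ e ∈ E, w e * ∏ i ∈ e, x i with hUdef
  have hdQ : d = (r.factorial : ℝ) * Q := by
    rw [← hyd]
    unfold polyForm
    rw [hQdef]
    congr 1
    exact Finset.sum_congr rfl fun T' _ => one_mul _
  have haU : a = (r.factorial : ℝ) * U := by rw [← hxa]; rfl
  have hEq1 : (k.choose r : ℝ) * ∑ σ : Equiv.Perm (Fin k), (∑ e ∈ E, w e * ∏ i ∈ e, z σ i)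
      = (k.factorial : ℝ) * Q * U := by
    rw [Finset.sum_comm, Finset.mul_sum]
    have key : ∀ e ∈ E, (k.choose r:ℝ) * ∑ σ : Equiv.Perm (Fin k), w e * ∏ i ∈ e, z σ i
        = (k.factorial:ℝ) * Q * (w e * ∏ i ∈ e, x i) := by
      intro e he
      have hinj : ∀ a' ∈ e, ∀ b' ∈ e, η a' = η b' → a' = b' := fun a' ha' b' hb' hab =>
        hη e he (Finset.mem_coe.mpr ha') (Finset.mem_coe.mpr hb') hab
      have hprodz : ∀ σ : Equiv.Perm (Fin k), ∏ i ∈ e, z σ i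
          = (∏ i ∈ e, x i) * ∏ t ∈ (e.image η).image ⇑σ, y t := by
        intro σ
        rw [Finset.prod_image (fun a' _ b' _ hab => σ.injective hab),
          Finset.prod_image hinj, ← Finset.prod_mul_distrib]
      have hcnt := HoffmanAux.sum_perm_image r (e.image η)
        (by rw [Finset.card_image_of_injOn (hη e he), hunif e he]) (fun T' => ∏ t ∈ T', y t)
      rw [← hQdef] at hcnt
      calc (k.choose r:ℝ) * ∑ σ : Equiv.Perm (Fin k), w e * ∏ i ∈ e, z σ i
          = (k.choose r:ℝ) * ∑ σ : Equiv.Perm (Fin k),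
              (w e * ∏ i ∈ e, x i) * ∏ t ∈ (e.image η).image ⇑σ, y t := by
            congr 1
            exact Finset.sum_congr rfl fun σ _ => by rw [hprodz σ]; ring
        _ = (w e * ∏ i ∈ e, x i) *
              ((k.choose r:ℝ) * ∑ σ : Equiv.Perm (Fin k), ∏ t ∈ (e.image η).image ⇑σ, y t) := by
            rw [← Finset.mul_sum]
            ring
        _ = (w e * ∏ i ∈ e, x i) * ((k.factorial:ℝ) * Q) := by rw [hcnt]
        _ = (k.factorial:ℝ) * Q * (w e * ∏ i ∈ e, x i) := by ring
    rw [Finset.sum_congr rfl key, ← Finset.mul_sum, ← hUdef]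
  have hS : ∑ σ : Equiv.Perm (Fin k), polyForm r E w (z σ)
      = (r.factorial:ℝ) * ∑ σ : Equiv.Perm (Fin k), (∑ e ∈ E, w e * ∏ i ∈ e, z σ i) := by
    unfold polyForm
    rw [← Finset.mul_sum]
  have hbA : b * A ≤ ∑ σ : Equiv.Perm (Fin k), polyForm r E w (z σ) := by
    rw [hAdef, Finset.mul_sum]
    exact Finset.sum_le_sum fun σ _ => step1 σ
  have hCpos : (0:ℝ) < (k.choose r : ℝ) := by exact_mod_cast Nat.choose_pos hkr
  have hFpos : (0:ℝ) < (k.factorial : ℝ) := by exact_mod_cast Nat.factorial_pos k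
  have hRFpos : (0:ℝ) < (r.factorial : ℝ) := by exact_mod_cast Nat.factorial_pos r
  have hkey1 : (r.factorial:ℝ) *
      ((k.choose r:ℝ) * ∑ σ : Equiv.Perm (Fin k), polyForm r E w (z σ))
      = (k.factorial:ℝ) * (d * a) := by
    rw [hS, hdQ, haU]
    linear_combination ((r.factorial:ℝ) * (r.factorial:ℝ)) * hEq1
  have hda : d * a < 0 := mul_neg_of_neg_of_pos hd ha
  have hSSneg : ∑ σ : Equiv.Perm (Fin k), polyForm r E w (z σ) < 0 := by
    by_contra hcon
    push_neg at hcon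
    have h1 : 0 ≤ (r.factorial:ℝ) *
        ((k.choose r:ℝ) * ∑ σ : Equiv.Perm (Fin k), polyForm r E w (z σ)) :=
      mul_nonneg hRFpos.le (mul_nonneg hCpos.le hcon)
    rw [hkey1] at h1
    nlinarith
  have hApos : 0 < A := by
    rcases hAnn.lt_or_eq with h | h
    · exact h
    · exfalso
      rw [← h, mul_zero] at hbA
      linarith
  have hbneg : b < 0 := by nlinarith
  have h3 : b * ((k.factorial:ℝ) * κ) ≤ ∑ σ : Equiv.Perm (Fin k), polyForm r E w (z σ) :=
    le_trans (mul_le_mul_of_nonpos_left hjensen hbneg.le) hbA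
  have h4 : (r.factorial:ℝ) * ((k.choose r:ℝ) * (b * ((k.factorial:ℝ) * κ)))
      ≤ (k.factorial:ℝ) * (d * a) := by
    rw [← hkey1]
    exact mul_le_mul_of_nonneg_left (mul_le_mul_of_nonneg_left h3 hCpos.le) hRFpos.le
  have h5 : (r.factorial:ℝ) * (k.choose r:ℝ) * κ * b ≤ d * a := by
    have hre : (r.factorial:ℝ) * ((k.choose r:ℝ) * (b * ((k.factorial:ℝ) * κ)))
        = (k.factorial:ℝ) * ((r.factorial:ℝ) * (k.choose r:ℝ) * κ * b) := by ring
    rw [hre] at h4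
    exact le_of_mul_le_mul_left h4 hFpos
  have hkey : b * c ≤ a * d := by
    calc b * c ≤ b * ((r.factorial:ℝ) * (k.choose r:ℝ) * κ) := by
          have := mul_le_mul_of_nonpos_left hcge hbneg.le
          calc b * c ≤ b * ((r.factorial:ℝ) * (k.choose r:ℝ) * κ) := by
                have h6 : (r.factorial:ℝ) * (k.choose r:ℝ) * κ ≤ c := hcge
                exact mul_le_mul_of_nonpos_left h6 hbneg.le
            _ = b * ((r.factorial:ℝ) * (k.choose r:ℝ) * κ) := rfl
      _ = (r.factorial:ℝ) * (k.choose r:ℝ) * κ * b := by ring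
      _ ≤ d * a := h5
      _ = a * d := by ring
  have hcpos : 0 < c := lt_of_lt_of_le (mul_pos (mul_pos hRFpos hCpos) hκ) hcge
  have hdb : 0 < d * b := mul_pos_of_neg_of_neg hd hbneg
  rw [ge_iff_le, ← sub_nonpos]
  have hgoal : c / d - a / b = (c * b - d * a) / (d * b) :=
    div_sub_div c a hd.ne hbneg.ne
  rw [hgoal]
  apply div_nonpos_of_nonpos_of_nonneg _ hdb.le
  linarith
end

section
/- Let r ≥ 2 be an even integer, let k ≥ r be an integer and p ≥ r be a real number. If G is a complete regular k-partite r-graph (unweighted), then λ^(p)(G) / λ_min^(p)(G) = λ^(p)(K_k^r) / λ_min^(p)(K_k^r). -/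
open Finset

/-- Edge set of the complete regular `k`-partite `r`-graph with parts of size `t`:
vertices are `Fin k × Fin t` (the parts are the fibers of `Prod.fst`), and edges are
all `r`-element vertex sets containing at most one vertex from each part. -/
def multiEdges (r k t : ℕ) : Finset (Finset (Fin k × Fin t)) :=
  (Finset.univ.powersetCard r).filter (fun e => (e.image Prod.fst).card = r)

lemma mem_multiEdges {r k t : ℕ} {e : Finset (Fin k × Fin t)} :
    e ∈ multiEdges r k t ↔ e.card = r ∧ (e.image Prod.fst).card = r := by
  simp [multiEdges, Finset.mem_powersetCard, Finset.subset_univ]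

lemma mem_completeEdges {r k : ℕ} {f : Finset (Fin k)} :
    f ∈ completeEdges r k ↔ f.card = r := by
  simp [completeEdges, Finset.mem_powersetCard, Finset.subset_univ]

noncomputable def pickSnd {k t : ℕ} (e : Finset (Fin k × Fin t)) (d : Fin t) (i : Fin k) : Fin t :=
  if h : ∃ j, (i, j) ∈ e then h.choose else d

lemma pickSnd_mem {k t : ℕ} {e : Finset (Fin k × Fin t)} {d : Fin t} {i : Fin k}
    (h : ∃ j, (i, j) ∈ e) : (i, pickSnd e d i) ∈ e := by
  rw [pickSnd, dif_pos h]; exact h.choose_spec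

lemma multi_sum_eq (r k t : ℕ) (ht : 1 ≤ t) (y : Fin k × Fin t → ℝ) :
    ∑ e ∈ multiEdges r k t, ∏ v ∈ e, y v
      = ∑ f ∈ completeEdges r k, ∏ i ∈ f, (∑ j : Fin t, y (i, j)) := by
  classical
  set d : Fin t := ⟨0, ht⟩ with hd
  set T : Finset (Fin k) → Fin k → Finset (Fin t) :=
    fun f i => if i ∈ f then (univ : Finset (Fin t)) else {d} with hT
  have claim1 : ∀ f : Finset (Fin k),
      ∏ i ∈ f, (∑ j : Fin t, y (i, j))
        = ∑ g ∈ Fintype.piFinset (T f), ∏ i ∈ f, y (i, g i) := by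
    intro f
    have h1 : ∏ i : Fin k, (∑ j ∈ T f i, (if i ∈ f then y (i, j) else 1))
        = ∏ i ∈ f, (∑ j : Fin t, y (i, j)) := by
      calc ∏ i : Fin k, (∑ j ∈ T f i, (if i ∈ f then y (i, j) else 1))
          = ∏ i : Fin k, (if i ∈ f then (∑ j : Fin t, y (i, j)) else 1) := by
            apply Finset.prod_congr rfl
            intro i _
            by_cases h : i ∈ f <;> simp [hT, h]
        _ = ∏ i ∈ f, (∑ j : Fin t, y (i, j)) := by
            rw [Finset.prod_ite_mem, Finset.univ_inter]
    rw [← h1, Finset.prod_univ_sum]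
    apply Finset.sum_congr rfl
    intro g hg
    rw [Finset.prod_ite_mem, Finset.univ_inter]
  simp_rw [claim1]
  rw [Finset.sum_sigma']
  symm
  have himgimg : ∀ (f : Finset (Fin k)) (g : Fin k → Fin t),
      (f.image (fun i => (i, g i))).image Prod.fst = f := by
    intro f g
    rw [Finset.image_image]
    exact Finset.image_id
  refine Finset.sum_nbij' (i := fun x => x.1.image (fun i => (i, x.2 i)))
    (j := fun e => ⟨e.image Prod.fst, fun i => pickSnd e d i⟩) ?hi ?hj ?li ?ri ?vals
  case hi =>
    rintro ⟨f, g⟩ hx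
    rw [Finset.mem_sigma, mem_completeEdges] at hx
    rw [mem_multiEdges]
    have hcard : (f.image (fun i => (i, g i))).card = f.card :=
      Finset.card_image_of_injOn (fun a _ b _ h => congrArg Prod.fst h)
    exact ⟨by rw [hcard, hx.1], by rw [himgimg, hx.1]⟩
  case hj =>
    intro e he
    rw [mem_multiEdges] at he
    rw [Finset.mem_sigma, mem_completeEdges]
    refine ⟨he.2, ?_⟩
    rw [Fintype.mem_piFinset]
    intro i
    by_cases h : i ∈ e.image Prod.fst
    · simp [hT, h]
    · have hno : ¬ ∃ j, (i, j) ∈ e := by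
        rintro ⟨j, hj⟩
        exact h (Finset.mem_image.mpr ⟨(i, j), hj, rfl⟩)
      simp [hT, h, pickSnd, dif_neg hno]
  case li =>
    rintro ⟨f, g⟩ hx
    rw [Finset.mem_sigma, mem_completeEdges, Fintype.mem_piFinset] at hx
    have hfun : (fun i => pickSnd (f.image (fun i => (i, g i))) d i) = g := by
      funext i
      by_cases h : i ∈ f
      · have hex : ∃ j, (i, j) ∈ f.image (fun i => (i, g i)) :=
          ⟨g i, Finset.mem_image.mpr ⟨i, h, rfl⟩⟩
        have hm := pickSnd_mem (d := d) hex
        obtain ⟨i', _, hi'⟩ := Finset.mem_image.mp hm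
        have h1 : i' = i := congrArg Prod.fst hi'
        subst h1
        exact (congrArg Prod.snd hi').symm
      · have hni : ¬ ∃ j, (i, j) ∈ f.image (fun i => (i, g i)) := by
          rintro ⟨j, hj⟩
          obtain ⟨i', hi'f, hi'⟩ := Finset.mem_image.mp hj
          have : i' = i := congrArg Prod.fst hi'
          exact h (this ▸ hi'f)
        have hg : g i = d := by
          have := hx.2 i
          simpa [hT, h] using this
        rw [pickSnd, dif_neg hni, hg]
    dsimp only
    rw [himgimg f g, hfun]
  case ri =>
    intro e he
    rw [mem_multiEdges] at he
    apply Finset.eq_of_subset_of_card_le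
    · intro v hv
      obtain ⟨i, hi, hv'⟩ := Finset.mem_image.mp hv
      obtain ⟨⟨i', j'⟩, hij, hfst⟩ := Finset.mem_image.mp hi
      simp only at hfst
      subst hfst
      rw [← hv']
      exact pickSnd_mem ⟨j', hij⟩
    · have hinj2 : ∀ a ∈ e.image Prod.fst, ∀ b ∈ e.image Prod.fst,
          (fun i => (i, pickSnd e d i)) a = (fun i => (i, pickSnd e d i)) b → a = b :=
        fun a _ b _ h => congrArg Prod.fst h
      rw [Finset.card_image_of_injOn (fun a ha b hb h => hinj2 a ha b hb h), he.2, he.1]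
  case vals =>
    rintro ⟨f, g⟩ hx
    exact (Finset.prod_image (fun a _ b _ h => congrArg Prod.fst h)).symm

section Analysis
variable {V : Type*} [Fintype V]

lemma sum_rpow_nonneg (p : ℝ) (x : V → ℝ) : 0 ≤ ∑ i, |x i| ^ p :=
  Finset.sum_nonneg fun i _ => Real.rpow_nonneg (abs_nonneg _) _

lemma lpNorm_nonneg (p : ℝ) (x : V → ℝ) : 0 ≤ lpNorm p x :=
  Real.rpow_nonneg (sum_rpow_nonneg p x) _

lemma sum_rpow_of_norm_one {p : ℝ} (hp : 0 < p) {x : V → ℝ} (h : lpNorm p x = 1) :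
    ∑ i, |x i| ^ p = 1 := by
  have h2 := congrArg (fun s : ℝ => s ^ p) h
  simp only [lpNorm] at h2
  rwa [← Real.rpow_mul (sum_rpow_nonneg p x), one_div_mul_cancel hp.ne',
    Real.rpow_one, Real.one_rpow] at h2

lemma lpNorm_eq_rpow_sum {p : ℝ} (x : V → ℝ) : lpNorm p x = (∑ i, |x i| ^ p) ^ (1/p) := rfl

lemma lpNorm_smul {p : ℝ} (hp : 0 < p) (c : ℝ) (x : V → ℝ) :
    lpNorm p (fun v => c * x v) = |c| * lpNorm p x := by
  unfold lpNorm
  have h1 : ∀ i, |c * x i| ^ p = |c| ^ p * |x i| ^ p := fun i => by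
    rw [abs_mul, Real.mul_rpow (abs_nonneg _) (abs_nonneg _)]
  simp only [h1, ← Finset.mul_sum]
  rw [Real.mul_rpow (Real.rpow_nonneg (abs_nonneg _) _) (sum_rpow_nonneg p x),
    ← Real.rpow_mul (abs_nonneg c), mul_one_div_cancel hp.ne', Real.rpow_one]

lemma lpNorm_eq_zero_iff {p : ℝ} (hp : 0 < p) {x : V → ℝ} (h : lpNorm p x = 0) :
    ∀ v, x v = 0 := by
  intro v
  have hsum : ∑ i, |x i| ^ p = 0 := by
    by_contra hne
    have hpos : 0 < ∑ i, |x i| ^ p := lt_of_le_of_ne (sum_rpow_nonneg p x) (Ne.symm hne)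
    have : (0:ℝ) < (∑ i, |x i| ^ p) ^ (1/p) := Real.rpow_pos_of_pos hpos _
    rw [lpNorm] at h
    linarith
  have hterm : |x v| ^ p = 0 := by
    have := (Finset.sum_eq_zero_iff_of_nonneg
      (fun i _ => Real.rpow_nonneg (abs_nonneg _) _)).mp hsum v (Finset.mem_univ v)
    exact this
  have : |x v| = 0 := by
    by_contra hne
    have hpos : 0 < |x v| := lt_of_le_of_ne (abs_nonneg _) (Ne.symm hne)
    exact absurd hterm (ne_of_gt (Real.rpow_pos_of_pos hpos _))
  exact abs_eq_zero.mp this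

lemma continuous_polyForm (r : ℕ) (E : Finset (Finset V)) (w : Finset V → ℝ) :
    Continuous (polyForm r E w) := by
  unfold polyForm
  exact continuous_const.mul (continuous_finset_sum _ fun e _ =>
    continuous_const.mul (continuous_finset_prod _ fun i _ => continuous_apply i))

lemma continuous_lpNorm {p : ℝ} (hp : 0 < p) : Continuous (lpNorm p (V := V)) := by
  unfold lpNorm
  have h1 : Continuous fun x : V → ℝ => ∑ i, |x i| ^ p :=
    continuous_finset_sum _ fun i _ =>
      ((continuous_apply i).abs).rpow_const (fun x => Or.inr hp.le)
  exact h1.rpow_const (fun x => Or.inr (by positivity))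

lemma isCompact_sphere' {p : ℝ} (hp : 0 < p) :
    IsCompact {x : V → ℝ | lpNorm p x = 1} := by
  have hclosed : IsClosed {x : V → ℝ | lpNorm p x = 1} :=
    isClosed_eq (continuous_lpNorm hp) continuous_const
  have hsub : {x : V → ℝ | lpNorm p x = 1} ⊆ Set.pi Set.univ (fun _ : V => Set.Icc (-1:ℝ) 1) := by
    intro x hx i _
    have hsum := sum_rpow_of_norm_one hp hx
    have hterm : |x i| ^ p ≤ 1 := by
      rw [← hsum]
      exact Finset.single_le_sum (fun j _ => Real.rpow_nonneg (abs_nonneg _) _)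
        (Finset.mem_univ i)
    have habs : |x i| ≤ 1 := by
      have h2 : (|x i| ^ p) ^ (1/p) ≤ (1:ℝ) ^ (1/p) :=
        Real.rpow_le_rpow (Real.rpow_nonneg (abs_nonneg _) _) hterm (by positivity)
      rwa [← Real.rpow_mul (abs_nonneg _), mul_one_div_cancel hp.ne', Real.rpow_one,
        Real.one_rpow] at h2
    exact ⟨neg_le_of_abs_le habs, le_of_abs_le habs⟩
  exact IsCompact.of_isClosed_subset
    (isCompact_univ_pi fun _ => isCompact_Icc) hclosed hsub

lemma valueSet_eq (r : ℕ) (p : ℝ) (E : Finset (Finset V)) (w : Finset V → ℝ) :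
    {t | ∃ x : V → ℝ, lpNorm p x = 1 ∧ polyForm r E w x = t}
      = polyForm r E w '' {x | lpNorm p x = 1} := by
  ext s
  simp only [Set.mem_setOf_eq, Set.mem_image]

lemma sphere_nonempty {p : ℝ} (hp : 0 < p) [Nonempty V] :
    ∃ x : V → ℝ, lpNorm p x = 1 := by
  obtain ⟨v0⟩ := ‹Nonempty V›
  classical
  refine ⟨fun i => if i = v0 then 1 else 0, ?_⟩
  unfold lpNorm
  have : ∀ i, |if i = v0 then (1:ℝ) else 0| ^ p = if i = v0 then 1 else 0 := by
    intro i
    by_cases h : i = v0 <;> simp [h, Real.one_rpow, Real.zero_rpow hp.ne']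
  rw [Finset.sum_congr rfl (fun i _ => this i), Finset.sum_ite_eq' Finset.univ v0 (fun _ => (1:ℝ))]
  simp [Real.one_rpow]

lemma lamMax_spec (r : ℕ) {p : ℝ} (hp : 0 < p) (E : Finset (Finset V)) (w : Finset V → ℝ)
    [Nonempty V] :
    (∃ x : V → ℝ, lpNorm p x = 1 ∧ polyForm r E w x = lamMax r p E w) ∧
      (∀ x : V → ℝ, lpNorm p x = 1 → polyForm r E w x ≤ lamMax r p E w) := by
  have hK : IsCompact (polyForm r E w '' {x : V → ℝ | lpNorm p x = 1}) :=
    (isCompact_sphere' hp).image (continuous_polyForm r E w)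
  have hne : (polyForm r E w '' {x : V → ℝ | lpNorm p x = 1}).Nonempty := by
    obtain ⟨x, hx⟩ := sphere_nonempty (V := V) hp
    exact ⟨polyForm r E w x, ⟨x, hx, rfl⟩⟩
  constructor
  · have hmem : lamMax r p E w ∈ polyForm r E w '' {x : V → ℝ | lpNorm p x = 1} := by
      rw [lamMax, valueSet_eq]
      exact hK.sSup_mem hne
    obtain ⟨x, hx1, hx2⟩ := hmem
    exact ⟨x, hx1, hx2⟩
  · intro x hx
    rw [lamMax, valueSet_eq]
    exact le_csSup hK.bddAbove ⟨x, hx, rfl⟩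

lemma lamMin_spec (r : ℕ) {p : ℝ} (hp : 0 < p) (E : Finset (Finset V)) (w : Finset V → ℝ)
    [Nonempty V] :
    (∃ x : V → ℝ, lpNorm p x = 1 ∧ polyForm r E w x = lamMin r p E w) ∧
      (∀ x : V → ℝ, lpNorm p x = 1 → lamMin r p E w ≤ polyForm r E w x) := by
  have hK : IsCompact (polyForm r E w '' {x : V → ℝ | lpNorm p x = 1}) :=
    (isCompact_sphere' hp).image (continuous_polyForm r E w)
  have hne : (polyForm r E w '' {x : V → ℝ | lpNorm p x = 1}).Nonempty := by
    obtain ⟨x, hx⟩ := sphere_nonempty (V := V) hp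
    exact ⟨polyForm r E w x, ⟨x, hx, rfl⟩⟩
  constructor
  · have hmem : lamMin r p E w ∈ polyForm r E w '' {x : V → ℝ | lpNorm p x = 1} := by
      rw [lamMin, valueSet_eq]
      exact hK.sInf_mem hne
    obtain ⟨x, hx1, hx2⟩ := hmem
    exact ⟨x, hx1, hx2⟩
  · intro x hx
    rw [lamMin, valueSet_eq]
    exact csInf_le hK.bddBelow ⟨x, hx, rfl⟩

lemma polyForm_smul (r : ℕ) (E : Finset (Finset V)) (w : Finset V → ℝ)
    (hE : ∀ e ∈ E, e.card = r) (c : ℝ) (x : V → ℝ) :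
    polyForm r E w (fun v => c * x v) = c ^ r * polyForm r E w x := by
  unfold polyForm
  have h1 : ∑ e ∈ E, w e * ∏ i ∈ e, (c * x i)
      = c ^ r * ∑ e ∈ E, w e * ∏ i ∈ e, x i := by
    rw [Finset.mul_sum]
    apply Finset.sum_congr rfl
    intro e he
    rw [Finset.prod_mul_distrib, Finset.prod_const, hE e he, mul_left_comm]
  simp only [h1]
  ring

end Analysis

section Main

lemma lpNorm_indicator_like {V : Type*} [Fintype V] [DecidableEq V] {p : ℝ} (hp : 0 < p)
    (f : Finset V) (hf : f.Nonempty) (x : V → ℝ)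
    (hx : ∀ i, |x i| = if i ∈ f then ((f.card : ℝ)) ^ (-(1/p)) else 0) :
    lpNorm p x = 1 := by
  unfold lpNorm
  have hc : (0:ℝ) < (f.card : ℝ) := by exact_mod_cast Finset.card_pos.mpr hf
  have h1 : ∀ i, |x i| ^ p = if i ∈ f then ((f.card : ℝ))⁻¹ else 0 := by
    intro i
    rw [hx i]
    by_cases h : i ∈ f
    · simp only [h, if_true]
      rw [← Real.rpow_mul hc.le, neg_mul, one_div_mul_cancel hp.ne', Real.rpow_neg_one]
    · simp [h, Real.zero_rpow hp.ne']
  have h2 : ∀ i, |x i| ^ p = if i ∈ f then ((f.card : ℝ))⁻¹ else 0 := h1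
  rw [Finset.sum_congr rfl (fun i _ => h2 i), Finset.sum_ite_mem, Finset.univ_inter,
    Finset.sum_const, nsmul_eq_mul, mul_inv_cancel₀ hc.ne']
  exact Real.one_rpow _

variable {r k t : ℕ} {p : ℝ}

lemma polyForm_multi (ht : 1 ≤ t) (y : Fin k × Fin t → ℝ) :
    polyForm r (multiEdges r k t) (fun _ => 1) y
      = polyForm r (completeEdges r k) (fun _ => 1) (fun i => ∑ j : Fin t, y (i, j)) := by
  unfold polyForm
  simp only [one_mul]
  rw [multi_sum_eq r k t ht y]

lemma z_norm_le (hp1 : 1 ≤ p) (ht : 1 ≤ t) (y : Fin k × Fin t → ℝ)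
    (hy : lpNorm p y = 1) :
    lpNorm p (fun i : Fin k => ∑ j : Fin t, y (i, j)) ≤ (t : ℝ) ^ (1 - 1/p) := by
  have hp0 : 0 < p := lt_of_lt_of_le one_pos hp1
  have htpos : (0:ℝ) < (t : ℝ) := by exact_mod_cast ht
  have stepA : ∀ i : Fin k, |∑ j : Fin t, y (i, j)| ^ p
      ≤ (t : ℝ) ^ (p - 1) * ∑ j : Fin t, |y (i, j)| ^ p := by
    intro i
    set a : Fin t → ℝ := fun j => |y (i, j)| with ha
    have habs : |∑ j : Fin t, y (i, j)| ≤ ∑ j : Fin t, a j :=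
      Finset.abs_sum_le_sum_abs _ _
    have h1 : |∑ j : Fin t, y (i, j)| ^ p ≤ (∑ j : Fin t, a j) ^ p :=
      Real.rpow_le_rpow (abs_nonneg _) habs hp0.le
    have hmean := Real.rpow_arith_mean_le_arith_mean_rpow Finset.univ
      (fun _ : Fin t => (t : ℝ)⁻¹) a
      (fun _ _ => by positivity)
      (by rw [Finset.sum_const, Finset.card_univ, Fintype.card_fin, nsmul_eq_mul,
        mul_inv_cancel₀ htpos.ne'])
      (fun j _ => abs_nonneg _) hp1
    have hlhs : ∑ j : Fin t, (t : ℝ)⁻¹ * a j = (t : ℝ)⁻¹ * ∑ j : Fin t, a j := by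
      rw [Finset.mul_sum]
    rw [hlhs, Real.mul_rpow (by positivity) (Finset.sum_nonneg fun j _ => abs_nonneg _),
      Real.inv_rpow htpos.le] at hmean
    -- hmean : ((t:ℝ)^p)⁻¹ * (∑ a)^p ≤ ∑ j, (t:ℝ)⁻¹ * a j ^ p
    have hrhs : ∑ j : Fin t, (t : ℝ)⁻¹ * a j ^ p = (t : ℝ)⁻¹ * ∑ j : Fin t, a j ^ p := by
      rw [Finset.mul_sum]
    rw [hrhs] at hmean
    have h2 : (∑ j : Fin t, a j) ^ p ≤ (t : ℝ) ^ p * ((t : ℝ)⁻¹ * ∑ j : Fin t, a j ^ p) := by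
      have h3 : (∑ j : Fin t, a j) ^ p
          = (t : ℝ) ^ p * (((t : ℝ) ^ p)⁻¹ * (∑ j : Fin t, a j) ^ p) := by
        rw [← mul_assoc, mul_inv_cancel₀ (ne_of_gt (Real.rpow_pos_of_pos htpos p)), one_mul]
      rw [h3]
      exact mul_le_mul_of_nonneg_left hmean (Real.rpow_nonneg htpos.le p)
    have h4 : (t : ℝ) ^ p * ((t : ℝ)⁻¹ * ∑ j : Fin t, a j ^ p)
        = (t : ℝ) ^ (p - 1) * ∑ j : Fin t, a j ^ p := by
      rw [← mul_assoc, Real.rpow_sub htpos, Real.rpow_one, div_eq_mul_inv]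
    rw [h4] at h2
    exact le_trans h1 h2
  have stepB : ∑ i : Fin k, |∑ j : Fin t, y (i, j)| ^ p ≤ (t : ℝ) ^ (p - 1) := by
    calc ∑ i : Fin k, |∑ j : Fin t, y (i, j)| ^ p
        ≤ ∑ i : Fin k, (t : ℝ) ^ (p - 1) * ∑ j : Fin t, |y (i, j)| ^ p :=
          Finset.sum_le_sum fun i _ => stepA i
      _ = (t : ℝ) ^ (p - 1) * ∑ i : Fin k, ∑ j : Fin t, |y (i, j)| ^ p := by
          rw [Finset.mul_sum]
      _ = (t : ℝ) ^ (p - 1) * ∑ v : Fin k × Fin t, |y v| ^ p := by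
          rw [Fintype.sum_prod_type]
      _ = (t : ℝ) ^ (p - 1) := by rw [sum_rpow_of_norm_one hp0 hy, mul_one]
  have stepC : lpNorm p (fun i : Fin k => ∑ j : Fin t, y (i, j))
      ≤ ((t : ℝ) ^ (p - 1)) ^ (1/p) := by
    unfold lpNorm
    exact Real.rpow_le_rpow (sum_rpow_nonneg _ _) stepB (by positivity)
  calc lpNorm p (fun i : Fin k => ∑ j : Fin t, y (i, j))
      ≤ ((t : ℝ) ^ (p - 1)) ^ (1/p) := stepC
    _ = (t : ℝ) ^ (1 - 1/p) := by
        rw [← Real.rpow_mul htpos.le, mul_one_div, sub_div, div_self hp0.ne']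

lemma lift_norm (hp0 : 0 < p) (ht : 1 ≤ t) (x : Fin k → ℝ) (hx : lpNorm p x = 1) :
    lpNorm p (fun v : Fin k × Fin t => (t : ℝ) ^ (-(1/p)) * x v.1) = 1 := by
  have htpos : (0:ℝ) < (t : ℝ) := by exact_mod_cast ht
  have hcpos : (0:ℝ) < (t : ℝ) ^ (-(1/p)) := Real.rpow_pos_of_pos htpos _
  unfold lpNorm
  have h1 : ∀ v : Fin k × Fin t,
      |(t : ℝ) ^ (-(1/p)) * x v.1| ^ p = (t : ℝ)⁻¹ * |x v.1| ^ p := by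
    intro v
    rw [abs_mul, abs_of_pos hcpos,
      Real.mul_rpow hcpos.le (abs_nonneg _), ← Real.rpow_mul htpos.le,
      neg_mul, one_div_mul_cancel hp0.ne', Real.rpow_neg_one]
  rw [Finset.sum_congr rfl (fun v _ => h1 v), Fintype.sum_prod_type]
  have h2 : ∀ i : Fin k, ∑ _j : Fin t, (t : ℝ)⁻¹ * |x i| ^ p = |x i| ^ p := by
    intro i
    rw [Finset.sum_const, Finset.card_univ, Fintype.card_fin, nsmul_eq_mul,
      ← mul_assoc, mul_inv_cancel₀ htpos.ne', one_mul]
  rw [Finset.sum_congr rfl (fun i _ => h2 i), sum_rpow_of_norm_one hp0 hx]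
  exact Real.one_rpow _

lemma lift_z (hp0 : 0 < p) (ht : 1 ≤ t) (x : Fin k → ℝ) :
    (fun i : Fin k => ∑ j : Fin t, (t : ℝ) ^ (-(1/p)) * x (i, j).1)
      = fun i => (t : ℝ) ^ (1 - 1/p) * x i := by
  have htpos : (0:ℝ) < (t : ℝ) := by exact_mod_cast ht
  funext i
  have h0 : ∀ j : Fin t, (t : ℝ) ^ (-(1/p)) * x (i, j).1 = (t : ℝ) ^ (-(1/p)) * x i :=
    fun j => rfl
  rw [Finset.sum_congr rfl (fun j _ => h0 j), Finset.sum_const, Finset.card_univ,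
    Fintype.card_fin, nsmul_eq_mul, ← mul_assoc]
  congr 1
  rw [show (1 : ℝ) - 1/p = 1 + (-(1/p)) by ring, Real.rpow_add htpos, Real.rpow_one]

end Main

section Main2

variable {r k t : ℕ} {p : ℝ}

lemma lamMax_complete_pos (hr2 : 2 ≤ r) (hkr : r ≤ k) (hp0 : 0 < p) :
    0 < lamMax r p (completeEdges r k) (fun _ => 1) := by
  haveI : Nonempty (Fin k) := ⟨⟨0, by omega⟩⟩
  obtain ⟨f, hfsub, hfcard⟩ := Finset.exists_subset_card_eq (s := (Finset.univ : Finset (Fin k))) (n := r)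
    (by rw [Finset.card_univ, Fintype.card_fin]; exact hkr)
  have hfK : f ∈ completeEdges r k := mem_completeEdges.mpr hfcard
  have hfne : f.Nonempty := Finset.card_pos.mp (by rw [hfcard]; omega)
  set c : ℝ := ((r : ℝ)) ^ (-(1/p)) with hc
  have hrpos : (0:ℝ) < (r : ℝ) := by exact_mod_cast (by omega : 0 < r)
  have hcpos : 0 < c := Real.rpow_pos_of_pos hrpos _
  set x : Fin k → ℝ := fun i => if i ∈ f then c else 0 with hxdef
  have hxnorm : lpNorm p x = 1 := by
    apply lpNorm_indicator_like hp0 f hfne x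
    intro i
    by_cases h : i ∈ f <;> simp [hxdef, h, abs_of_pos hcpos, hfcard, hc] <;> positivity
  have hterm : ∀ e ∈ completeEdges r k, 0 ≤ ∏ i ∈ e, x i := by
    intro e _
    apply Finset.prod_nonneg
    intro i _
    by_cases h : i ∈ f <;> simp [hxdef, h, hcpos.le]
  have hf_term : ∏ i ∈ f, x i = c ^ r := by
    rw [Finset.prod_congr rfl (fun i hi => if_pos hi), Finset.prod_const, hfcard]
  have hsum : c ^ r ≤ ∑ e ∈ completeEdges r k, ∏ i ∈ e, x i := by
    rw [← hf_term]
    exact Finset.single_le_sum hterm hfK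
  have hval : 0 < polyForm r (completeEdges r k) (fun _ => 1) x := by
    unfold polyForm
    simp only [one_mul]
    apply mul_pos
    · exact_mod_cast Nat.factorial_pos r
    · exact lt_of_lt_of_le (pow_pos hcpos r) hsum
  exact lt_of_lt_of_le hval ((lamMax_spec r hp0 (completeEdges r k) (fun _ => 1)).2 x hxnorm)

lemma lamMin_complete_neg (hr2 : 2 ≤ r) (hkr : r ≤ k) (hp0 : 0 < p) :
    lamMin r p (completeEdges r k) (fun _ => 1) < 0 := by
  haveI : Nonempty (Fin k) := ⟨⟨0, by omega⟩⟩
  obtain ⟨f, hfsub, hfcard⟩ := Finset.exists_subset_card_eq (s := (Finset.univ : Finset (Fin k))) (n := r)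
    (by rw [Finset.card_univ, Fintype.card_fin]; exact hkr)
  have hfK : f ∈ completeEdges r k := mem_completeEdges.mpr hfcard
  have hfne : f.Nonempty := Finset.card_pos.mp (by rw [hfcard]; omega)
  obtain ⟨i0, hi0⟩ := hfne
  set c : ℝ := ((r : ℝ)) ^ (-(1/p)) with hc
  have hrpos : (0:ℝ) < (r : ℝ) := by exact_mod_cast (by omega : 0 < r)
  have hcpos : 0 < c := Real.rpow_pos_of_pos hrpos _
  set x : Fin k → ℝ := fun i => if i = i0 then -c else if i ∈ f then c else 0 with hxdef
  have hxnorm : lpNorm p x = 1 := by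
    apply lpNorm_indicator_like hp0 f ⟨i0, hi0⟩ x
    intro i
    by_cases h : i = i0
    · subst h
      simp [hxdef, hi0, abs_of_pos hcpos, hfcard, hc]
      positivity
    · by_cases h2 : i ∈ f <;> simp [hxdef, h, h2, abs_of_pos hcpos, hfcard, hc] <;> positivity
  have hsum_single : ∑ e ∈ completeEdges r k, (1:ℝ) * ∏ i ∈ e, x i
      = ∏ i ∈ f, x i := by
    rw [Finset.sum_eq_single_of_mem f hfK]
    · rw [one_mul]
    · intro e he hne
      have hcard := mem_completeEdges.mp he
      have hnsub : ¬ e ⊆ f := by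
        intro hsub
        exact hne (Finset.eq_of_subset_of_card_le hsub (by rw [hfcard, hcard]))
      obtain ⟨i, hie, hif⟩ := Finset.not_subset.mp hnsub
      have hii0 : i ≠ i0 := fun h => hif (h ▸ hi0)
      rw [one_mul, Finset.prod_eq_zero hie (by simp [hxdef, hii0, hif])]
  have hprod : ∏ i ∈ f, x i = -c * c ^ (r - 1) := by
    rw [← Finset.mul_prod_erase f x hi0]
    congr 1
    · simp [hxdef]
    · have : ∀ i ∈ f.erase i0, x i = c := by
        intro i hi
        have h1 : i ≠ i0 := Finset.ne_of_mem_erase hi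
        have h2 : i ∈ f := Finset.mem_of_mem_erase hi
        simp [hxdef, h1, h2]
      rw [Finset.prod_congr rfl this, Finset.prod_const, Finset.card_erase_of_mem hi0, hfcard]
  have hval : polyForm r (completeEdges r k) (fun _ => 1) x < 0 := by
    unfold polyForm
    rw [hsum_single, hprod]
    have h1 : -c * c ^ (r - 1) < 0 := by
      have := pow_pos hcpos (r - 1)
      nlinarith
    have h2 : (0:ℝ) < (r.factorial : ℝ) := by exact_mod_cast Nat.factorial_pos r
    nlinarith
  exact lt_of_le_of_lt
    ((lamMin_spec r hp0 (completeEdges r k) (fun _ => 1)).2 x hxnorm) hval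

lemma polyForm_zero_of_norm_zero (hr1 : 1 ≤ r) (hp0 : 0 < p) {W : Type*} [Fintype W]
    (E : Finset (Finset W)) (hE : ∀ e ∈ E, e.card = r) {z : W → ℝ}
    (hz : lpNorm p z = 0) : polyForm r E (fun _ => 1) z = 0 := by
  have hz0 := lpNorm_eq_zero_iff hp0 hz
  unfold polyForm
  have hzero : ∀ e ∈ E, (fun _ => (1:ℝ)) e * ∏ i ∈ e, z i = 0 := by
    intro e he
    have hne : e.Nonempty := Finset.card_pos.mp (by rw [hE e he]; omega)
    obtain ⟨i, hi⟩ := hne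
    rw [one_mul, Finset.prod_eq_zero hi (hz0 i)]
  rw [Finset.sum_congr rfl hzero, Finset.sum_const, smul_zero, mul_zero]

lemma polyForm_scale_eq (hr1 : 1 ≤ r) (hp0 : 0 < p) {W : Type*} [Fintype W]
    (E : Finset (Finset W)) (hE : ∀ e ∈ E, e.card = r) (z : W → ℝ)
    (hz : lpNorm p z ≠ 0) :
    polyForm r E (fun _ => 1) z
      = (lpNorm p z) ^ r * polyForm r E (fun _ => 1) (fun v => (lpNorm p z)⁻¹ * z v) := by
  have hs : 0 < lpNorm p z := lt_of_le_of_ne (lpNorm_nonneg p z) (Ne.symm hz)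
  have h := polyForm_smul r E (fun _ => 1) hE (lpNorm p z) (fun v => (lpNorm p z)⁻¹ * z v)
  have harg : (fun v => lpNorm p z * ((lpNorm p z)⁻¹ * z v)) = z := by
    funext v
    rw [← mul_assoc, mul_inv_cancel₀ hs.ne', one_mul]
  rw [harg] at h
  exact h

lemma unit_of_scale (hp0 : 0 < p) {W : Type*} [Fintype W] (z : W → ℝ)
    (hz : lpNorm p z ≠ 0) : lpNorm p (fun v => (lpNorm p z)⁻¹ * z v) = 1 := by
  have hs : 0 < lpNorm p z := lt_of_le_of_ne (lpNorm_nonneg p z) (Ne.symm hz)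
  rw [lpNorm_smul hp0, abs_of_pos (inv_pos.mpr hs), inv_mul_cancel₀ hs.ne']

lemma lamMax_scale (hr2 : 2 ≤ r) (hkr : r ≤ k) (ht : 1 ≤ t) (hp1 : 1 ≤ p) :
    lamMax r p (multiEdges r k t) (fun _ => 1)
      = ((t : ℝ) ^ (1 - 1/p)) ^ r * lamMax r p (completeEdges r k) (fun _ => 1) := by
  have hp0 : 0 < p := lt_of_lt_of_le one_pos hp1
  haveI : Nonempty (Fin k) := ⟨⟨0, by omega⟩⟩
  haveI : Nonempty (Fin t) := ⟨⟨0, by omega⟩⟩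
  have htpos : (0:ℝ) < (t : ℝ) := by exact_mod_cast ht
  have hCpos : 0 < ((t : ℝ) ^ (1 - 1/p)) ^ r := pow_pos (Real.rpow_pos_of_pos htpos _) r
  have hA := lamMax_complete_pos hr2 hkr hp0
  have hcards : ∀ e ∈ completeEdges r k, e.card = r := fun e he => mem_completeEdges.mp he
  apply le_antisymm
  · obtain ⟨y, hy1, hy2⟩ := (lamMax_spec r hp0 (multiEdges r k t) (fun _ => 1)).1
    rw [← hy2, polyForm_multi ht y]
    set z : Fin k → ℝ := fun i => ∑ j : Fin t, y (i, j) with hzdef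
    by_cases hz : lpNorm p z = 0
    · rw [polyForm_zero_of_norm_zero (by omega) hp0 _ hcards hz]
      positivity
    · have hs : 0 < lpNorm p z := lt_of_le_of_ne (lpNorm_nonneg p z) (Ne.symm hz)
      rw [polyForm_scale_eq (by omega) hp0 _ hcards z hz]
      have hub := (lamMax_spec r hp0 (completeEdges r k) (fun _ => 1)).2 _
        (unit_of_scale hp0 z hz)
      have hnorm : lpNorm p z ≤ (t : ℝ) ^ (1 - 1/p) := z_norm_le hp1 ht y hy1
      calc (lpNorm p z) ^ r * polyForm r (completeEdges r k) (fun _ => 1)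
            (fun v => (lpNorm p z)⁻¹ * z v)
          ≤ (lpNorm p z) ^ r * lamMax r p (completeEdges r k) (fun _ => 1) :=
            mul_le_mul_of_nonneg_left hub (pow_nonneg hs.le r)
        _ ≤ ((t : ℝ) ^ (1 - 1/p)) ^ r * lamMax r p (completeEdges r k) (fun _ => 1) :=
            mul_le_mul_of_nonneg_right (pow_le_pow_left₀ hs.le hnorm r) hA.le
  · obtain ⟨x, hx1, hx2⟩ := (lamMax_spec r hp0 (completeEdges r k) (fun _ => 1)).1
    have hy1 : lpNorm p (fun v : Fin k × Fin t => (t : ℝ) ^ (-(1/p)) * x v.1) = 1 :=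
      lift_norm hp0 ht x hx1
    have hy2 : polyForm r (multiEdges r k t) (fun _ => 1)
        (fun v : Fin k × Fin t => (t : ℝ) ^ (-(1/p)) * x v.1)
        = ((t : ℝ) ^ (1 - 1/p)) ^ r * lamMax r p (completeEdges r k) (fun _ => 1) := by
      rw [polyForm_multi ht _, lift_z hp0 ht x,
        polyForm_smul r (completeEdges r k) (fun _ => 1) hcards, hx2]
    have hle := (lamMax_spec r hp0 (multiEdges r k t) (fun _ => 1)).2 _ hy1
    rw [hy2] at hle
    exact hle

lemma lamMin_scale (hr2 : 2 ≤ r) (hkr : r ≤ k) (ht : 1 ≤ t) (hp1 : 1 ≤ p) :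
    lamMin r p (multiEdges r k t) (fun _ => 1)
      = ((t : ℝ) ^ (1 - 1/p)) ^ r * lamMin r p (completeEdges r k) (fun _ => 1) := by
  have hp0 : 0 < p := lt_of_lt_of_le one_pos hp1
  haveI : Nonempty (Fin k) := ⟨⟨0, by omega⟩⟩
  haveI : Nonempty (Fin t) := ⟨⟨0, by omega⟩⟩
  have htpos : (0:ℝ) < (t : ℝ) := by exact_mod_cast ht
  have hCpos : 0 < ((t : ℝ) ^ (1 - 1/p)) ^ r := pow_pos (Real.rpow_pos_of_pos htpos _) r
  have hB := lamMin_complete_neg hr2 hkr hp0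
  have hcards : ∀ e ∈ completeEdges r k, e.card = r := fun e he => mem_completeEdges.mp he
  apply le_antisymm
  · obtain ⟨x, hx1, hx2⟩ := (lamMin_spec r hp0 (completeEdges r k) (fun _ => 1)).1
    have hy1 : lpNorm p (fun v : Fin k × Fin t => (t : ℝ) ^ (-(1/p)) * x v.1) = 1 :=
      lift_norm hp0 ht x hx1
    have hy2 : polyForm r (multiEdges r k t) (fun _ => 1)
        (fun v : Fin k × Fin t => (t : ℝ) ^ (-(1/p)) * x v.1)
        = ((t : ℝ) ^ (1 - 1/p)) ^ r * lamMin r p (completeEdges r k) (fun _ => 1) := by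
      rw [polyForm_multi ht _, lift_z hp0 ht x,
        polyForm_smul r (completeEdges r k) (fun _ => 1) hcards, hx2]
    have hle := (lamMin_spec r hp0 (multiEdges r k t) (fun _ => 1)).2 _ hy1
    rw [hy2] at hle
    exact hle
  · obtain ⟨y, hy1, hy2⟩ := (lamMin_spec r hp0 (multiEdges r k t) (fun _ => 1)).1
    rw [← hy2, polyForm_multi ht y]
    set z : Fin k → ℝ := fun i => ∑ j : Fin t, y (i, j) with hzdef
    by_cases hz : lpNorm p z = 0
    · rw [polyForm_zero_of_norm_zero (by omega) hp0 _ hcards hz]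
      nlinarith
    · have hs : 0 < lpNorm p z := lt_of_le_of_ne (lpNorm_nonneg p z) (Ne.symm hz)
      rw [polyForm_scale_eq (by omega) hp0 _ hcards z hz]
      have hlb := (lamMin_spec r hp0 (completeEdges r k) (fun _ => 1)).2 _
        (unit_of_scale hp0 z hz)
      have hnorm : lpNorm p z ≤ (t : ℝ) ^ (1 - 1/p) := z_norm_le hp1 ht y hy1
      calc ((t : ℝ) ^ (1 - 1/p)) ^ r * lamMin r p (completeEdges r k) (fun _ => 1)
          ≤ (lpNorm p z) ^ r * lamMin r p (completeEdges r k) (fun _ => 1) :=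
            mul_le_mul_of_nonpos_right (pow_le_pow_left₀ hs.le hnorm r) hB.le
        _ ≤ (lpNorm p z) ^ r * polyForm r (completeEdges r k) (fun _ => 1)
            (fun v => (lpNorm p z)⁻¹ * z v) :=
            mul_le_mul_of_nonneg_left hlb (pow_nonneg hs.le r)

end Main2


/-- **Theorem 1 (equality part).** Let `r ≥ 2` be even, `k ≥ r`, and `p ≥ r`.
If `G` is the complete regular `k`-partite `r`-graph (parts of size `t ≥ 1`), then
`λ^(p)(G)/λ_min^(p)(G) = λ^(p)(K_k^r)/λ_min^(p)(K_k^r)`. -/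
theorem hoffman_hypergraph_equality (r k t : ℕ) (p : ℝ)
    (hr2 : 2 ≤ r) (hre : Even r) (hkr : r ≤ k) (hp : (r : ℝ) ≤ p) (ht : 1 ≤ t) :
    lamMax r p (multiEdges r k t) (fun _ => 1) /
        lamMin r p (multiEdges r k t) (fun _ => 1) =
      lamMax r p (completeEdges r k) (fun _ => 1) /
        lamMin r p (completeEdges r k) (fun _ => 1) := by
  have hr2' : (2:ℝ) ≤ (r:ℝ) := by exact_mod_cast hr2
  have hp1 : 1 ≤ p := by linarith
  have htpos : (0:ℝ) < (t : ℝ) := by exact_mod_cast ht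
  have hCpos : 0 < ((t : ℝ) ^ (1 - 1/p)) ^ r :=
    pow_pos (Real.rpow_pos_of_pos htpos _) r
  rw [lamMax_scale hr2 hkr ht hp1, lamMin_scale hr2 hkr ht hp1,
    mul_div_mul_left _ _ hCpos.ne']
end

section
/- Let k ≥ r ≥ 2 be integers and p ≥ 1 be a real number. Then λ^(p)(K_k^r) = k^{1−r/p} · (k−1)(k−2)⋯(k−r+1), i.e., the maximum of P_{K_k^r}(x) over x ∈ ℝ^k with |x|_p = 1 equals k^{1−r/p} ∏_{i=1}^{r−1} (k−i). -/
open Finset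

/-- Recursion: (r+1) e_{r+1}(s) = ∑_{i∈s} y i · e_r(s \ i). -/
lemma esymm_rec {V : Type*} [DecidableEq V] (y : V → ℝ) (s : Finset V) (r : ℕ) :
    ((r : ℝ) + 1) * ∑ e ∈ s.powersetCard (r + 1), ∏ i ∈ e, y i
      = ∑ i ∈ s, y i * ∑ e ∈ (s.erase i).powersetCard r, ∏ j ∈ e, y j := by
  have h1 : ∀ i ∈ s, y i * ∑ e ∈ (s.erase i).powersetCard r, ∏ j ∈ e, y j
      = ∑ e ∈ (s.erase i).powersetCard r, ∏ j ∈ insert i e, y j := by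
    intro i hi
    rw [Finset.mul_sum]
    refine Finset.sum_congr rfl fun e he => ?_
    have hie : i ∉ e := fun h =>
      (Finset.notMem_erase i s) ((Finset.mem_powersetCard.1 he).1 h)
    rw [Finset.prod_insert hie]
  rw [Finset.sum_congr rfl h1]
  have h2 : ((r : ℝ) + 1) * ∑ e ∈ s.powersetCard (r + 1), ∏ i ∈ e, y i
      = ∑ e ∈ s.powersetCard (r + 1), ∑ i ∈ e, ∏ j ∈ e, y j := by
    rw [Finset.mul_sum]
    refine Finset.sum_congr rfl fun e he => ?_
    rw [Finset.sum_const, (Finset.mem_powersetCard.1 he).2]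
    push_cast
    ring
  rw [h2, Finset.sum_sigma', Finset.sum_sigma']
  refine Finset.sum_bij' (fun a ha => (⟨a.2, a.1.erase a.2⟩ : Σ _ : V, Finset V))
    (fun a ha => (⟨insert a.1 a.2, a.1⟩ : Σ _ : Finset V, V)) ?_ ?_ ?_ ?_ ?_
  · rintro ⟨e, i⟩ ha
    rw [Finset.mem_sigma] at ha ⊢
    obtain ⟨he, hi⟩ := ha
    obtain ⟨hes, hec⟩ := Finset.mem_powersetCard.1 he
    refine ⟨hes hi, Finset.mem_powersetCard.2 ⟨?_, ?_⟩⟩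
    · exact Finset.erase_subset_erase _ hes
    · rw [Finset.card_erase_of_mem hi, hec]; rfl
  · rintro ⟨i, e⟩ ha
    rw [Finset.mem_sigma] at ha ⊢
    obtain ⟨hi, he⟩ := ha
    obtain ⟨hes, hec⟩ := Finset.mem_powersetCard.1 he
    have hie : i ∉ e := fun h => (Finset.notMem_erase i s) (hes h)
    refine ⟨Finset.mem_powersetCard.2 ⟨?_, ?_⟩, Finset.mem_insert_self _ _⟩
    · exact Finset.insert_subset hi (hes.trans (Finset.erase_subset _ _))
    · rw [Finset.card_insert_of_notMem hie, hec]
  · rintro ⟨e, i⟩ ha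
    rw [Finset.mem_sigma] at ha
    simp [Finset.insert_erase ha.2]
  · rintro ⟨i, e⟩ ha
    rw [Finset.mem_sigma] at ha
    have hes := (Finset.mem_powersetCard.1 ha.2).1
    have hie : i ∉ e := fun h => (Finset.notMem_erase i s) (hes h)
    simp [Finset.erase_insert hie]
  · rintro ⟨e, i⟩ ha
    rw [Finset.mem_sigma] at ha
    rw [Finset.insert_erase ha.2]


/-- Tangent line bound for `f(t) = t (S - t)^m` at `t₀ ≤ S/(m+1)`. -/
lemma tangent_line (m : ℕ) (hm : 1 ≤ m) {S t₀ : ℝ} (ht₀ : 0 < t₀)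
    (hS : ((m : ℝ) + 1) * t₀ ≤ S) {t : ℝ} (ht : 0 ≤ t) (htS : t ≤ S) :
    t * (S - t) ^ m ≤ t₀ * (S - t₀) ^ m
      + (S - t₀) ^ (m - 1) * (S - ((m : ℝ) + 1) * t₀) * (t - t₀) := by
  have hm1 : (1 : ℝ) ≤ (m : ℝ) := by exact_mod_cast hm
  have ht₀S : t₀ < S := by nlinarith
  have hSm : 0 ≤ S - ((m : ℝ) + 1) * t₀ := by linarith
  set B : ℝ := (S - t₀) ^ (m - 1) * (S - ((m : ℝ) + 1) * t₀) with hB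
  have hBnn : 0 ≤ B := by
    apply mul_nonneg (pow_nonneg (by linarith) _) hSm
  set g : ℝ → ℝ := fun u => t₀ * (S - t₀) ^ m + B * (u - t₀) - u * (S - u) ^ m with hg
  have hpow : ∀ u : ℝ, (S - u) ^ m = (S - u) ^ (m - 1) * (S - u) := by
    intro u
    rw [← pow_succ, Nat.sub_add_cancel hm]
  have hg' : ∀ u : ℝ, HasDerivAt g (B - (S - u) ^ (m - 1) * (S - ((m : ℝ) + 1) * u)) u := by
    intro u
    have h1 : HasDerivAt (fun u : ℝ => S - u) (-1) u := (hasDerivAt_id u).const_sub S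
    have h2 := h1.pow m
    have h3 := (hasDerivAt_id u).mul h2
    have h4 := (((hasDerivAt_id u).sub_const t₀).const_mul B).const_add (t₀ * (S - t₀) ^ m)
    have h5 := h4.sub h3
    convert h5 using 1
    · exact rfl
    · exact rfl
    · exact rfl
    show B - (S - u) ^ (m - 1) * (S - ((m : ℝ) + 1) * u) = B * 1 - (1 * (S - u) ^ m + id u * ((m : ℝ) * (S - u) ^ (m - 1) * -1))
    rw [hpow u]
    simp only [id_eq]
    ring
  have hderiv : ∀ u : ℝ, deriv g u = B - (S - u) ^ (m - 1) * (S - ((m : ℝ) + 1) * u) :=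
    fun u => (hg' u).deriv
  have hdiff : Differentiable ℝ g := fun u => (hg' u).differentiableAt
  have haux1 : ∀ u : ℝ, t₀ ≤ u → u ≤ S → (S - u) ^ (m - 1) * (S - ((m : ℝ) + 1) * u) ≤ B := by
    intro u h1 h2
    rcases le_or_gt (S - ((m : ℝ) + 1) * u) 0 with h | h
    · exact le_trans (mul_nonpos_of_nonneg_of_nonpos (pow_nonneg (by linarith) _) h) hBnn
    · apply mul_le_mul (pow_le_pow_left₀ (by linarith) (by linarith) _) (by nlinarith)
        (le_of_lt h) (pow_nonneg (by linarith) _)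
  have haux2 : ∀ u : ℝ, 0 ≤ u → u ≤ t₀ → B ≤ (S - u) ^ (m - 1) * (S - ((m : ℝ) + 1) * u) := by
    intro u h1 h2
    apply mul_le_mul (pow_le_pow_left₀ (by linarith) (by linarith) _) (by nlinarith) hSm
      (pow_nonneg (by linarith) _)
  have hmono : MonotoneOn g (Set.Icc t₀ S) := by
    apply monotoneOn_of_deriv_nonneg (convex_Icc _ _) hdiff.continuous.continuousOn
      hdiff.differentiableOn
    intro u hu
    rw [interior_Icc] at hu
    rw [hderiv u, sub_nonneg]
    exact haux1 u hu.1.le hu.2.le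
  have hanti : AntitoneOn g (Set.Icc 0 t₀) := by
    apply antitoneOn_of_deriv_nonpos (convex_Icc _ _) hdiff.continuous.continuousOn
      hdiff.differentiableOn
    intro u hu
    rw [interior_Icc] at hu
    rw [hderiv u, sub_nonpos]
    exact haux2 u hu.1.le hu.2.le
  have hgt₀ : g t₀ = 0 := by simp [hg]
  have hgoal : 0 ≤ g t := by
    rcases le_total t t₀ with h | h
    · rw [← hgt₀]
      exact hanti ⟨ht, h⟩ ⟨le_of_lt ht₀, le_refl _⟩ h
    · rw [← hgt₀]
      exact hmono ⟨le_refl _, le_of_lt ht₀S⟩ ⟨h, htS⟩ h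
  simp only [hg, sub_nonneg] at hgoal
  linarith [hgoal]

/-- Maclaurin-type inequality: `e_r(y) ≤ C(k,r) (S/k)^r` for nonnegative `y`. -/
lemma macl {V : Type*} [DecidableEq V] :
    ∀ (r : ℕ), 1 ≤ r → ∀ (s : Finset V) (y : V → ℝ), r ≤ s.card →
      (∀ i ∈ s, 0 ≤ y i) →
      ∑ e ∈ s.powersetCard r, ∏ i ∈ e, y i
        ≤ (s.card.choose r : ℝ) * ((∑ i ∈ s, y i) / s.card) ^ r := by
  intro r hr
  induction r, hr using Nat.le_induction with
  | base =>
    intro s y hcard hy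
    have hc0 : (0 : ℝ) < s.card := by exact_mod_cast hcard
    rw [Finset.powersetCard_one, Finset.sum_map]
    simp only [Function.Embedding.coeFn_mk, Finset.prod_singleton, Nat.choose_one_right,
      pow_one]
    rw [mul_div_assoc']
    rw [mul_comm, mul_div_assoc, div_self (ne_of_gt hc0), mul_one]
  | succ r hr ih =>
    intro s y hcard hy
    set k := s.card with hk
    have hk2 : 2 ≤ k := le_trans (by omega) hcard
    have hK0 : (0 : ℝ) < (k : ℝ) := by exact_mod_cast (by omega : 0 < k)
    have hK1 : (1 : ℝ) ≤ (k : ℝ) - 1 := by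
      have : (2 : ℝ) ≤ (k : ℝ) := by exact_mod_cast hk2
      linarith
    set S := ∑ i ∈ s, y i with hSdef
    have hS0 : 0 ≤ S := Finset.sum_nonneg hy
    rcases eq_or_lt_of_le hS0 with hS | hSpos
    · -- S = 0 : all terms vanish
      have hz : ∀ i ∈ s, y i = 0 := by
        intro i hi
        exact (Finset.sum_eq_zero_iff_of_nonneg hy).1 hS.symm i hi
      have hL : ∑ e ∈ s.powersetCard (r + 1), ∏ i ∈ e, y i = 0 := by
        apply Finset.sum_eq_zero
        intro e he
        obtain ⟨hes, hec⟩ := Finset.mem_powersetCard.1 he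
        obtain ⟨i, hi⟩ := Finset.card_pos.1 (by omega : 0 < e.card)
        exact Finset.prod_eq_zero hi (hz i (hes hi))
      rw [hL, ← hS, zero_div, zero_pow (by omega : r + 1 ≠ 0), mul_zero]
    · -- main case S > 0
      set t₀ : ℝ := S / k with ht₀def
      have ht₀pos : 0 < t₀ := div_pos hSpos hK0
      have hrk : ((r : ℝ) + 1) ≤ (k : ℝ) := by exact_mod_cast hcard
      have hKt₀ : (k : ℝ) * t₀ = S := by
        rw [ht₀def, mul_comm, div_mul_cancel₀ _ (ne_of_gt hK0)]
      have hmt₀ : ((r : ℝ) + 1) * t₀ ≤ S := by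
        calc ((r : ℝ) + 1) * t₀ ≤ (k : ℝ) * t₀ :=
              mul_le_mul_of_nonneg_right hrk (le_of_lt ht₀pos)
          _ = S := hKt₀
      set B : ℝ := (S - t₀) ^ (r - 1) * (S - ((r : ℝ) + 1) * t₀) with hB
      -- tangent-line sum bound
      have htang : ∑ i ∈ s, y i * (S - y i) ^ r ≤ S * (S - t₀) ^ r := by
        have h1 : ∀ i ∈ s, y i * (S - y i) ^ r
            ≤ t₀ * (S - t₀) ^ r + B * (y i - t₀) := by
          intro i hi
          exact tangent_line r hr ht₀pos hmt₀ (hy i hi)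
            (Finset.single_le_sum hy hi)
        calc ∑ i ∈ s, y i * (S - y i) ^ r
            ≤ ∑ i ∈ s, (t₀ * (S - t₀) ^ r + B * (y i - t₀)) := Finset.sum_le_sum h1
          _ = (k : ℝ) * (t₀ * (S - t₀) ^ r) + B * (S - (k : ℝ) * t₀) := by
              rw [Finset.sum_add_distrib, Finset.sum_const, ← Finset.mul_sum,
                Finset.sum_sub_distrib, Finset.sum_const, nsmul_eq_mul, nsmul_eq_mul]
          _ = S * (S - t₀) ^ r := by
              rw [hKt₀, sub_self, mul_zero, add_zero, ← mul_assoc, hKt₀]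
      -- apply recursion + induction hypothesis
      have hrec := esymm_rec y s r
      have hIH : ∑ i ∈ s, y i * ∑ e ∈ (s.erase i).powersetCard r, ∏ j ∈ e, y j
          ≤ (((k - 1).choose r : ℝ) / ((k : ℝ) - 1) ^ r) * ∑ i ∈ s, y i * (S - y i) ^ r := by
        rw [Finset.mul_sum]
        apply Finset.sum_le_sum
        intro i hi
        have hcarde : (s.erase i).card = k - 1 := by rw [Finset.card_erase_of_mem hi]
        have hsume : ∑ j ∈ s.erase i, y j = S - y i := by
          have := Finset.add_sum_erase s y hi
          linarith
        have hcast : (((k - 1 : ℕ)) : ℝ) = (k : ℝ) - 1 := by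
          rw [Nat.cast_sub (by omega : 1 ≤ k)]; norm_num
        have hi' := ih (s.erase i) y
          (by rw [hcarde]; omega)
          (fun j hj => hy j (Finset.mem_of_mem_erase hj))
        rw [hcarde, hsume, hcast] at hi'
        calc y i * ∑ e ∈ (s.erase i).powersetCard r, ∏ j ∈ e, y j
            ≤ y i * (((k - 1).choose r : ℝ) * ((S - y i) / ((k : ℝ) - 1)) ^ r) :=
              mul_le_mul_of_nonneg_left hi' (hy i hi)
          _ = ((k - 1).choose r : ℝ) / ((k : ℝ) - 1) ^ r * (y i * (S - y i) ^ r) := by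
              rw [div_pow]; ring
      -- combine
      have hcnn : 0 ≤ ((k - 1).choose r : ℝ) / ((k : ℝ) - 1) ^ r := by positivity
      have hmain : ((r : ℝ) + 1) * ∑ e ∈ s.powersetCard (r + 1), ∏ i ∈ e, y i
          ≤ (((k - 1).choose r : ℝ) / ((k : ℝ) - 1) ^ r) * (S * (S - t₀) ^ r) := by
        rw [hrec]
        exact le_trans hIH (mul_le_mul_of_nonneg_left htang hcnn)
      -- simplify the right-hand side
      have hSt₀ : S - t₀ = S * ((k : ℝ) - 1) / k := by
        rw [ht₀def]; field_simp
      have hchoose : (k : ℝ) * ((k - 1).choose r : ℝ) = (k.choose (r + 1) : ℝ) * ((r : ℝ) + 1) := by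
        have h := Nat.add_one_mul_choose_eq (k - 1) r
        have hk1 : k - 1 + 1 = k := by omega
        rw [hk1] at h
        exact_mod_cast h
      have hrhs : (((k - 1).choose r : ℝ) / ((k : ℝ) - 1) ^ r) * (S * (S - t₀) ^ r)
          = ((r : ℝ) + 1) * ((k.choose (r + 1) : ℝ) * (S / k) ^ (r + 1)) := by
        have hKne : (k : ℝ) ≠ 0 := ne_of_gt hK0
        have hK1ne : ((k : ℝ) - 1) ≠ 0 := by linarith
        rw [hSt₀, div_pow, mul_pow, div_pow, pow_succ, pow_succ]
        field_simp
        linear_combination hchoose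
      rw [hrhs] at hmain
      have hpos : (0 : ℝ) < (r : ℝ) + 1 := by positivity
      exact le_of_mul_le_mul_left hmain hpos

lemma descF_cast (r k : ℕ) (hr2 : 2 ≤ r) (hkr : r ≤ k) :
    (r.factorial : ℝ) * (k.choose r : ℝ)
      = (k : ℝ) * ∏ i ∈ Finset.Icc 1 (r - 1), ((k : ℝ) - (i : ℝ)) := by
  have h1 : (r.factorial : ℝ) * (k.choose r : ℝ) = (k.descFactorial r : ℝ) := by
    rw [Nat.descFactorial_eq_factorial_mul_choose]; push_cast; ring
  have h2 : (k.descFactorial r : ℝ) = ∏ i ∈ Finset.range r, ((k : ℝ) - (i : ℝ)) := by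
    rw [Nat.descFactorial_eq_prod_range, Nat.cast_prod]
    refine Finset.prod_congr rfl fun i hi => ?_
    have : i ≤ k := le_trans (le_of_lt (Finset.mem_range.1 hi)) hkr
    rw [Nat.cast_sub this]
  rw [h1, h2, Finset.range_eq_Ico, Finset.prod_eq_prod_Ico_succ_bot (by omega : 0 < r),
    show Finset.Ico 1 r = Finset.Icc 1 (r - 1) from by
      ext a
      simp only [Finset.mem_Ico, Finset.mem_Icc]
      omega]
  norm_num

/-- Equation (9) of the paper: for `k ≥ r ≥ 2` and real `p ≥ 1`, the maximum of
`P_{K_k^r}(x)` over the unit ℓ^p sphere equals `k^{1-r/p} (k-1)(k-2)⋯(k-r+1)`. -/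
theorem lamMax_complete (r k : ℕ) (p : ℝ)
    (hr2 : 2 ≤ r) (hkr : r ≤ k) (hp : 1 ≤ p) :
    IsGreatest
      {t | ∃ x : Fin k → ℝ, lpNorm p x = 1 ∧
        polyForm r (completeEdges r k) (fun _ => 1) x = t}
      ((k : ℝ) ^ (1 - (r : ℝ) / p) * ∏ i ∈ Finset.Icc 1 (r - 1), ((k : ℝ) - (i : ℝ))) := by
  have hr1 : 1 ≤ r := by omega
  have hk2 : 2 ≤ k := le_trans hr2 hkr
  have hK0 : (0 : ℝ) < (k : ℝ) := by exact_mod_cast (by omega : 0 < k)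
  have hp0 : 0 < p := lt_of_lt_of_le one_pos hp
  set c : ℝ := (k : ℝ) ^ (-(1 / p)) with hc
  have hcpos : 0 < c := Real.rpow_pos_of_pos hK0 _
  have hval : (r.factorial : ℝ) * ((k.choose r : ℝ) * (k : ℝ) ^ (-((r : ℝ) / p)))
      = (k : ℝ) ^ (1 - (r : ℝ) / p) * ∏ i ∈ Finset.Icc 1 (r - 1), ((k : ℝ) - (i : ℝ)) := by
    rw [← mul_assoc, descF_cast r k hr2 hkr,
      show (1 - (r : ℝ) / p) = 1 + (-((r : ℝ) / p)) by ring, Real.rpow_add hK0,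
      Real.rpow_one]
    ring
  have hcr : c ^ r = (k : ℝ) ^ (-((r : ℝ) / p)) := by
    rw [hc, ← Real.rpow_natCast ((k : ℝ) ^ (-(1 / p))) r, ← Real.rpow_mul (le_of_lt hK0)]
    congr 1
    ring
  have hcp : c ^ p = (k : ℝ)⁻¹ := by
    rw [hc, ← Real.rpow_mul (le_of_lt hK0),
      show (-(1 / p)) * p = -1 by field_simp, Real.rpow_neg_one]
  constructor
  · -- membership: the uniform vector attains the value
    refine ⟨fun _ => c, ?_, ?_⟩
    · unfold lpNorm
      simp only [abs_of_pos hcpos, hcp]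
      rw [Finset.sum_const, Finset.card_univ, Fintype.card_fin, nsmul_eq_mul,
        mul_inv_cancel₀ (ne_of_gt hK0), Real.one_rpow]
    · unfold polyForm completeEdges
      have hcongr : ∀ e ∈ Finset.powersetCard r (Finset.univ : Finset (Fin k)),
          (1 : ℝ) * ∏ _i ∈ e, c = c ^ r := by
        intro e he
        rw [one_mul, Finset.prod_const, (Finset.mem_powersetCard.1 he).2]
      rw [Finset.sum_congr rfl hcongr, Finset.sum_const, Finset.card_powersetCard,
        Finset.card_univ, Fintype.card_fin, nsmul_eq_mul, hcr, hval]
  · -- upper bound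
    rintro t ⟨x, hx, rfl⟩
    set S : ℝ := ∑ i, |x i| with hS
    have hS0 : 0 ≤ S := Finset.sum_nonneg fun i _ => abs_nonneg _
    have hxp1 : ∑ i, |x i| ^ p = 1 := by
      have h0 : (0 : ℝ) ≤ ∑ i, |x i| ^ p :=
        Finset.sum_nonneg fun i _ => Real.rpow_nonneg (abs_nonneg _) _
      unfold lpNorm at hx
      calc ∑ i, |x i| ^ p = ((∑ i, |x i| ^ p) ^ (1 / p)) ^ p := by
            rw [← Real.rpow_mul h0, show (1 / p) * p = 1 by field_simp, Real.rpow_one]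
        _ = (1 : ℝ) ^ p := by rw [hx]
        _ = 1 := Real.one_rpow p
    have hSk : S / k ≤ c := by
      have h := Real.arith_mean_le_rpow_mean Finset.univ (fun _ => (k : ℝ)⁻¹)
        (fun i => |x i|) (fun i _ => by positivity)
        (by rw [Finset.sum_const, Finset.card_univ, Fintype.card_fin, nsmul_eq_mul,
              mul_inv_cancel₀ (ne_of_gt hK0)])
        (fun i _ => abs_nonneg _) hp
      rw [← Finset.mul_sum, ← Finset.mul_sum, hxp1, mul_one] at h
      calc S / k = (k : ℝ)⁻¹ * S := by rw [div_eq_mul_inv, mul_comm]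
        _ ≤ ((k : ℝ)⁻¹) ^ (1 / p) := h
        _ = c := by rw [Real.inv_rpow (le_of_lt hK0), ← Real.rpow_neg (le_of_lt hK0), hc]
    have hub1 : polyForm r (completeEdges r k) (fun _ => 1) x
        ≤ (r.factorial : ℝ) * ∑ e ∈ Finset.powersetCard r (Finset.univ : Finset (Fin k)),
            ∏ i ∈ e, |x i| := by
      unfold polyForm completeEdges
      refine mul_le_mul_of_nonneg_left (Finset.sum_le_sum fun e _ => ?_) (by positivity)
      rw [one_mul]
      calc ∏ i ∈ e, x i ≤ |∏ i ∈ e, x i| := le_abs_self _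
        _ = ∏ i ∈ e, |x i| := Finset.abs_prod _ _
    have hub2 := macl r hr1 Finset.univ (fun i => |x i|)
      (by rw [Finset.card_univ, Fintype.card_fin]; exact hkr) (fun i _ => abs_nonneg _)
    rw [Finset.card_univ, Fintype.card_fin] at hub2
    have hub3 : (S / (k : ℝ)) ^ r ≤ c ^ r :=
      pow_le_pow_left₀ (div_nonneg hS0 (le_of_lt hK0)) hSk r
    calc polyForm r (completeEdges r k) (fun _ => 1) x
        ≤ (r.factorial : ℝ) * ∑ e ∈ Finset.powersetCard r (Finset.univ : Finset (Fin k)),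
            ∏ i ∈ e, |x i| := hub1
      _ ≤ (r.factorial : ℝ) * ((k.choose r : ℝ) * (S / k) ^ r) :=
          mul_le_mul_of_nonneg_left hub2 (by positivity)
      _ ≤ (r.factorial : ℝ) * ((k.choose r : ℝ) * c ^ r) := by
          refine mul_le_mul_of_nonneg_left (mul_le_mul_of_nonneg_left hub3 (by positivity))
            (by positivity)
      _ = (k : ℝ) ^ (1 - (r : ℝ) / p) * ∏ i ∈ Finset.Icc 1 (r - 1), ((k : ℝ) - (i : ℝ)) := by
          rw [hcr, hval]
end

section
/- Let k ≥ r ≥ 2 be integers, let G_w be a weighted r-graph on vertex set [n], and let η : [n] → [k] be a map that is injective on every edge of G_w (a proper k-partition). For x ∈ ℝ^n and y ∈ ℝ^k and each permutation σ of [k], define z_σ ∈ ℝ^n by (z_σ)_i = x_i · y_{σ(η(i))}. Then ∑_{σ ∈ S_k} P_{G_w}(z_σ) = (k−r)! · P_{G_w}(x) · P_{K_k^r}(y), where the sum is over all k! permutations σ of [k]. -/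
open Finset

/-- Sum over r-subsets is invariant under composing with a permutation. -/
lemma sum_powersetCard_perm {k r : ℕ} (y : Fin k → ℝ) (σ : Equiv.Perm (Fin k)) :
    ∑ t ∈ Finset.univ.powersetCard r, ∏ j ∈ t, y (σ j)
      = ∑ t ∈ Finset.univ.powersetCard r, ∏ j ∈ t, y j := by
  refine Finset.sum_nbij' (fun t => t.image σ) (fun t => t.image σ.symm) ?_ ?_ ?_ ?_ ?_
  · intro t ht
    simp only [Finset.mem_powersetCard_univ] at ht ⊢
    rw [Finset.card_image_of_injective _ σ.injective, ht]
  · intro t ht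
    simp only [Finset.mem_powersetCard_univ] at ht ⊢
    rw [Finset.card_image_of_injective _ σ.symm.injective, ht]
  · intro t _
    simp [Finset.image_image]
  · intro t _
    simp [Finset.image_image]
  · intro t _
    rw [Finset.prod_image (fun a _ b _ h => σ.injective h)]

/-- The permutation sum of a product over a set depends only on the cardinality. -/
lemma sum_perm_prod_card {k : ℕ} (y : Fin k → ℝ) (s s' : Finset (Fin k))
    (h : s.card = s'.card) :
    ∑ σ : Equiv.Perm (Fin k), ∏ j ∈ s, y (σ j)
      = ∑ σ : Equiv.Perm (Fin k), ∏ j ∈ s', y (σ j) := by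
  have hc : Fintype.card {j // j ∈ s'} = Fintype.card {j // j ∈ s} := by
    simp [Fintype.card_coe, h]
  have hcn : Fintype.card {j // ¬ j ∈ s'} = Fintype.card {j // ¬ j ∈ s} := by
    rw [Fintype.card_subtype_compl, Fintype.card_subtype_compl, hc]
  let e : {j // j ∈ s'} ≃ {j // j ∈ s} := Fintype.equivOfCardEq hc
  let f : {j // ¬ j ∈ s'} ≃ {j // ¬ j ∈ s} := Fintype.equivOfCardEq hcn
  let τ : Equiv.Perm (Fin k) := Equiv.subtypeCongr e f
  have hτ : s'.image τ = s := by
    apply Finset.eq_of_subset_of_card_le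
    · intro j hj
      simp only [Finset.mem_image] at hj
      obtain ⟨a, ha, rfl⟩ := hj
      have : τ a = (e ⟨a, ha⟩ : Fin k) := by
        simp [τ, Equiv.subtypeCongr, ha]
      rw [this]
      exact (e ⟨a, ha⟩).2
    · rw [Finset.card_image_of_injective _ τ.injective, h]
  have key : ∀ σ : Equiv.Perm (Fin k),
      ∏ j ∈ s, y (σ j) = ∏ j ∈ s', y ((σ * τ) j) := by
    intro σ
    rw [← hτ, Finset.prod_image (fun a _ b _ hab => τ.injective hab)]
    rfl
  calc ∑ σ : Equiv.Perm (Fin k), ∏ j ∈ s, y (σ j)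
      = ∑ σ : Equiv.Perm (Fin k), ∏ j ∈ s', y ((σ * τ) j) := by
        exact Finset.sum_congr rfl fun σ _ => key σ
    _ = ∑ σ : Equiv.Perm (Fin k), ∏ j ∈ s', y (σ j) :=
        Equiv.sum_comp (Equiv.mulRight τ) (fun σ => ∏ j ∈ s', y (σ j))

/-- Key counting identity. -/
lemma sum_perm_prod_eq {k r : ℕ} (hkr : r ≤ k) (y : Fin k → ℝ) (s : Finset (Fin k))
    (hs : s.card = r) :
    ∑ σ : Equiv.Perm (Fin k), ∏ j ∈ s, y (σ j)
      = (r.factorial * (k - r).factorial : ℝ) *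
        ∑ t ∈ Finset.univ.powersetCard r, ∏ j ∈ t, y j := by
  have hchoose : (0 : ℝ) < (k.choose r : ℝ) := by
    exact_mod_cast Nat.choose_pos hkr
  apply mul_left_cancel₀ (ne_of_gt hchoose)
  have card_pc : (Finset.univ.powersetCard r : Finset (Finset (Fin k))).card = k.choose r := by
    rw [Finset.card_powersetCard, Finset.card_univ, Fintype.card_fin]
  calc (k.choose r : ℝ) * ∑ σ : Equiv.Perm (Fin k), ∏ j ∈ s, y (σ j)
      = ∑ t ∈ Finset.univ.powersetCard r, ∑ σ : Equiv.Perm (Fin k), ∏ j ∈ t, y (σ j) := by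
        rw [Finset.sum_congr rfl (fun t ht => sum_perm_prod_card y t s
          (by rw [hs, Finset.mem_powersetCard_univ.mp ht])), Finset.sum_const, card_pc,
          nsmul_eq_mul]
    _ = ∑ σ : Equiv.Perm (Fin k), ∑ t ∈ Finset.univ.powersetCard r, ∏ j ∈ t, y (σ j) :=
        Finset.sum_comm
    _ = ∑ _σ : Equiv.Perm (Fin k), ∑ t ∈ Finset.univ.powersetCard r, ∏ j ∈ t, y j :=
        Finset.sum_congr rfl (fun σ _ => sum_powersetCard_perm y σ)
    _ = (k.factorial : ℝ) * ∑ t ∈ Finset.univ.powersetCard r, ∏ j ∈ t, y j := by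
        rw [Finset.sum_const, Finset.card_univ, Fintype.card_perm, Fintype.card_fin,
          nsmul_eq_mul]
    _ = (k.choose r : ℝ) * ((r.factorial * (k - r).factorial : ℝ) *
          ∑ t ∈ Finset.univ.powersetCard r, ∏ j ∈ t, y j) := by
        have hfact : (k.factorial : ℝ) = (k.choose r : ℝ) *
            (r.factorial * (k - r).factorial) := by
          rw [← Nat.choose_mul_factorial_mul_factorial hkr]
          push_cast
          ring
        rw [hfact]
        ring

/-- Equation (6) of the paper: if `η : [n] → [k]` is injective on every edge of the
weighted `r`-graph `G_w` (with `k ≥ r ≥ 2`), and for each permutation `σ` of `[k]`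
the vector `z_σ` is defined by `(z_σ)_i = x_i · y_{σ(η(i))}`, then
`∑_{σ ∈ S_k} P_{G_w}(z_σ) = (k-r)! · P_{G_w}(x) · P_{K_k^r}(y)`. -/
theorem sum_perm_polyForm (r k n : ℕ)
    (hr2 : 2 ≤ r) (hkr : r ≤ k)
    (E : Finset (Finset (Fin n))) (w : Finset (Fin n) → ℝ)
    (hunif : ∀ e ∈ E, e.card = r)
    (η : Fin n → Fin k) (hη : ∀ e ∈ E, Set.InjOn η (e : Set (Fin n)))
    (x : Fin n → ℝ) (y : Fin k → ℝ) :
    ∑ σ : Equiv.Perm (Fin k), polyForm r E w (fun i => x i * y (σ (η i))) =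
      ((k - r).factorial : ℝ) * polyForm r E w x *
        polyForm r (completeEdges r k) (fun _ => 1) y := by
  simp only [polyForm, completeEdges, one_mul]
  calc ∑ σ : Equiv.Perm (Fin k), (r.factorial : ℝ) *
        ∑ e ∈ E, w e * ∏ i ∈ e, (x i * y (σ (η i)))
      = (r.factorial : ℝ) * ∑ e ∈ E, ∑ σ : Equiv.Perm (Fin k),
          w e * ∏ i ∈ e, (x i * y (σ (η i))) := by
        rw [← Finset.mul_sum, Finset.sum_comm]
    _ = (r.factorial : ℝ) * ∑ e ∈ E, (w e * ∏ i ∈ e, x i) *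
          ((r.factorial * (k - r).factorial : ℝ) *
            ∑ t ∈ Finset.univ.powersetCard r, ∏ j ∈ t, y j) := by
        refine congrArg _ (Finset.sum_congr rfl fun e he => ?_)
        have hinj : ∀ a ∈ e, ∀ b ∈ e, η a = η b → a = b :=
          fun a ha b hb => hη e he ha hb
        have hcard : (e.image η).card = r := by
          rw [Finset.card_image_of_injOn (hη e he), hunif e he]
        calc ∑ σ : Equiv.Perm (Fin k), w e * ∏ i ∈ e, (x i * y (σ (η i)))
            = ∑ σ : Equiv.Perm (Fin k), (w e * ∏ i ∈ e, x i) *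
                ∏ j ∈ e.image η, y (σ j) := by
              refine Finset.sum_congr rfl fun σ _ => ?_
              rw [Finset.prod_mul_distrib, Finset.prod_image hinj]
              ring
          _ = (w e * ∏ i ∈ e, x i) *
                ∑ σ : Equiv.Perm (Fin k), ∏ j ∈ e.image η, y (σ j) := by
              rw [← Finset.mul_sum]
          _ = (w e * ∏ i ∈ e, x i) *
                ((r.factorial * (k - r).factorial : ℝ) *
                  ∑ t ∈ Finset.univ.powersetCard r, ∏ j ∈ t, y j) := by
              rw [sum_perm_prod_eq hkr y _ hcard]
    _ = ((k - r).factorial : ℝ) * ((r.factorial : ℝ) * ∑ e ∈ E, w e * ∏ i ∈ e, x i) *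
          ((r.factorial : ℝ) * ∑ t ∈ Finset.univ.powersetCard r, ∏ j ∈ t, y j) := by
        rw [← Finset.sum_mul]
        ring
end

section
/- Let k ≥ r ≥ 2 be integers and p ≥ r a real number. Let η : [n] → [k] be any map, let x ∈ ℝ^n satisfy ∑_{i=1}^n |x_i|^p = 1, and let y ∈ ℝ^k satisfy ∑_{j=1}^k |y_j|^p = 1. Then ∑_{σ ∈ S_k} ( ∑_{i=1}^n |x_i|^p |y_{σ(η(i))}|^p )^{r/p} ≤ k^{1−r/p} · (k−1)!, where the sum is over all k! permutations σ of [k]. -/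
open Finset

/-- Sum over all permutations of a function of the image of a fixed point. -/
lemma sum_perm_eval {m : ℕ} (j₀ : Fin (m + 1)) (f : Fin (m + 1) → ℝ) :
    ∑ σ : Equiv.Perm (Fin (m + 1)), f (σ j₀) = (m.factorial : ℝ) * ∑ j, f j := by
  have h0 : ∑ σ : Equiv.Perm (Fin (m + 1)), f (σ j₀)
      = ∑ σ : Equiv.Perm (Fin (m + 1)), f (σ 0) := by
    refine Fintype.sum_equiv (Equiv.mulRight (Equiv.swap 0 j₀)) _ _ ?_
    intro σ
    simp [Equiv.Perm.mul_apply, Equiv.swap_apply_left]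
  rw [h0, ← Equiv.sum_comp (Equiv.Perm.decomposeFin).symm (fun σ => f (σ 0))]
  rw [Fintype.sum_prod_type]
  simp only [Equiv.Perm.decomposeFin_symm_apply_zero]
  simp only [Finset.sum_const, Fintype.card_perm, nsmul_eq_mul]
  rw [← Finset.mul_sum, Finset.card_univ, Fintype.card_perm]
  simp

/-- Inequality (7) of the paper: for `k ≥ r ≥ 2`, real `p ≥ r`, any map
`η : [n] → [k]`, and any `x ∈ ℝ^n`, `y ∈ ℝ^k` with `∑ |x_i|^p = ∑ |y_j|^p = 1`:
`∑_{σ ∈ S_k} (∑_i |x_i|^p |y_{σ(η(i))}|^p)^{r/p} ≤ k^{1-r/p} (k-1)!`. -/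
theorem sum_perm_pow_le (r k n : ℕ) (p : ℝ)
    (hr2 : 2 ≤ r) (hkr : r ≤ k) (hp : (r : ℝ) ≤ p)
    (η : Fin n → Fin k) (x : Fin n → ℝ) (y : Fin k → ℝ)
    (hx : ∑ i, |x i| ^ p = 1) (hy : ∑ j, |y j| ^ p = 1) :
    ∑ σ : Equiv.Perm (Fin k), (∑ i, |x i| ^ p * |y (σ (η i))| ^ p) ^ ((r : ℝ) / p) ≤
      (k : ℝ) ^ (1 - (r : ℝ) / p) * ((k - 1).factorial : ℝ) := by
  have hk1 : 1 ≤ k := le_trans (le_trans one_le_two hr2) hkr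
  obtain ⟨m, rfl⟩ : ∃ m, k = m + 1 := ⟨k - 1, (Nat.succ_pred_eq_of_pos hk1).symm⟩
  have hr0 : (0:ℝ) < r := by positivity
  have hp0 : (0:ℝ) < p := lt_of_lt_of_le hr0 hp
  set t : ℝ := (r : ℝ) / p with htdef
  have ht1 : t ≤ 1 := (div_le_one hp0).mpr hp
  have ht0 : (0:ℝ) < t := div_pos hr0 hp0
  set a : Equiv.Perm (Fin (m+1)) → ℝ := fun σ => ∑ i, |x i| ^ p * |y (σ (η i))| ^ p with ha
  have ha_nonneg : ∀ σ, 0 ≤ a σ := fun σ =>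
    Finset.sum_nonneg fun i _ => mul_nonneg (Real.rpow_nonneg (abs_nonneg _) _)
      (Real.rpow_nonneg (abs_nonneg _) _)
  -- total sum of a equals m!
  have hsum : ∑ σ : Equiv.Perm (Fin (m+1)), a σ = (m.factorial : ℝ) := by
    simp only [ha]
    rw [Finset.sum_comm]
    have h1 : ∀ i : Fin n, ∑ σ : Equiv.Perm (Fin (m+1)), |x i| ^ p * |y (σ (η i))| ^ p
        = |x i| ^ p * (m.factorial : ℝ) := by
      intro i
      rw [← Finset.mul_sum, sum_perm_eval (η i) (fun j => |y j| ^ p), hy, mul_one]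
    rw [Finset.sum_congr rfl (fun i _ => h1 i), ← Finset.sum_mul, hx, one_mul]
  set N : ℕ := (m+1).factorial with hN
  have hNpos : (0:ℝ) < N := by positivity
  have hcard : (Finset.univ : Finset (Equiv.Perm (Fin (m+1)))).card = N := by
    simp [hN, Finset.card_univ, Fintype.card_perm]
  -- power mean inequality
  have key : ∑ σ : Equiv.Perm (Fin (m+1)), (a σ) ^ t ≤
      (N : ℝ) ^ (1 - t) * ((m.factorial : ℝ)) ^ t := by
    have hpm := Real.arith_mean_le_rpow_mean (Finset.univ)
      (fun _ : Equiv.Perm (Fin (m+1)) => (N : ℝ)⁻¹) (fun σ => (a σ) ^ t)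
      (fun _ _ => by positivity)
      (by rw [Finset.sum_const, hcard, nsmul_eq_mul, mul_inv_cancel₀ hNpos.ne'])
      (fun σ _ => Real.rpow_nonneg (ha_nonneg σ) t)
      (p := p / r) ((le_div_iff₀ hr0).mpr (by simpa using hp))
    have hzpow : ∀ σ : Equiv.Perm (Fin (m+1)), ((a σ) ^ t) ^ (p / (r:ℝ)) = a σ := by
      intro σ
      rw [← Real.rpow_mul (ha_nonneg σ), htdef,
        div_mul_div_comm, mul_comm, div_self (by positivity), Real.rpow_one]
    simp only [hzpow, ← Finset.mul_sum, hsum] at hpm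
    have h2 : (N : ℝ) * ((N:ℝ)⁻¹ * ∑ σ : Equiv.Perm (Fin (m+1)), (a σ) ^ t) =
        ∑ σ : Equiv.Perm (Fin (m+1)), (a σ) ^ t := by
      field_simp
    calc ∑ σ : Equiv.Perm (Fin (m+1)), (a σ) ^ t
        = (N : ℝ) * ((N:ℝ)⁻¹ * ∑ σ : Equiv.Perm (Fin (m+1)), (a σ) ^ t) := h2.symm
      _ ≤ (N : ℝ) * ((N:ℝ)⁻¹ * (m.factorial : ℝ)) ^ (1 / (p/(r:ℝ))) := by
          apply mul_le_mul_of_nonneg_left hpm hNpos.le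
      _ = (N : ℝ) ^ (1 - t) * ((m.factorial : ℝ)) ^ t := by
          have h3 : 1 / (p/(r:ℝ)) = t := by rw [one_div_div]
          rw [h3, Real.mul_rpow (by positivity) (by positivity),
            Real.inv_rpow hNpos.le, ← mul_assoc]
          congr 1
          rw [Real.rpow_sub hNpos, Real.rpow_one, div_eq_mul_inv]
  -- rewrite the RHS
  have hRHS : (N : ℝ) ^ (1 - t) * ((m.factorial : ℝ)) ^ t =
      ((m+1 : ℕ) : ℝ) ^ (1 - t) * (((m+1) - 1).factorial : ℝ) := by
    have hfac : (N : ℝ) = ((m+1 : ℕ) : ℝ) * (m.factorial : ℝ) := by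
      rw [hN, Nat.factorial_succ]; push_cast; ring
    rw [hfac, Real.mul_rpow (by positivity) (by positivity), mul_assoc,
      ← Real.rpow_add (by positivity), sub_add_cancel, Real.rpow_one]
    simp
  calc ∑ σ : Equiv.Perm (Fin (m+1)), (a σ) ^ t ≤ (N : ℝ) ^ (1 - t) * ((m.factorial : ℝ)) ^ t := key
    _ = _ := hRHS
end

section
/- Let r ≥ 2 be an even integer, k ≥ r an integer and p ≥ r a real number. Let G be the complete regular k-partite r-graph with k parts each of size t ≥ 1. Then λ_min^(p)(G) = t^{r−r/p} · λ_min^(p)(K_k^r). -/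
open Finset

namespace LamMinAux

open Finset Real

lemma multi_sum_eq (r k t : ℕ) (y : Fin k × Fin t → ℝ) :
    ∑ e ∈ multiEdges r k t, ∏ v ∈ e, y v
      = ∑ S ∈ completeEdges r k, ∏ i ∈ S, ∑ j, y (i, j) := by
  classical
  unfold multiEdges completeEdges
  have hrhs : ∑ S ∈ (univ : Finset (Fin k)).powersetCard r, ∏ i ∈ S, ∑ j, y (i, j)
      = ∑ z ∈ ((univ : Finset (Fin k)).powersetCard r).sigma
          (fun S => S.pi (fun _ => (univ : Finset (Fin t)))),
          ∏ a ∈ z.1.attach, y (a.1, z.2 a.1 a.2) := by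
    rw [Finset.sum_sigma]
    exact Finset.sum_congr rfl fun S _ => by
      exact Finset.prod_sum S (fun _ => (univ : Finset (Fin t))) (fun i j => y (i, j))
  rw [hrhs]
  refine (Finset.sum_bij
    (fun (z : Σ S : Finset (Fin k), (∀ a ∈ S, Fin t)) hz =>
      z.1.attach.image (fun a => (a.1, z.2 a.1 a.2))) ?_ ?_ ?_ ?_).symm
  · -- maps to
    rintro ⟨S, f⟩ hz
    simp only [Finset.mem_sigma, Finset.mem_powersetCard] at hz
    have hcard : S.card = r := hz.1.2
    have hinj : Set.InjOn (fun a : {x // x ∈ S} => ((a.1, f a.1 a.2) : Fin k × Fin t))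
        ↑S.attach := by
      intro a _ b _ hab
      exact Subtype.ext (congrArg Prod.fst hab)
    simp only [Finset.mem_filter, Finset.mem_powersetCard]
    refine ⟨⟨Finset.subset_univ _, ?_⟩, ?_⟩
    · rw [Finset.card_image_of_injOn hinj, Finset.card_attach, hcard]
    · have himg : (S.attach.image (fun a => ((a.1, f a.1 a.2) : Fin k × Fin t))).image
          Prod.fst = S := by
        rw [Finset.image_image]
        exact Finset.attach_image_val
      rw [himg, hcard]
  · -- injective
    rintro ⟨S₁, f₁⟩ h₁ ⟨S₂, f₂⟩ h₂ heq
    simp only at heq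
    have himg : ∀ (S : Finset (Fin k)) (f : ∀ a ∈ S, Fin t),
        (S.attach.image (fun a => ((a.1, f a.1 a.2) : Fin k × Fin t))).image Prod.fst = S := by
      intro S f
      rw [Finset.image_image]
      exact Finset.attach_image_val
    have hS : S₁ = S₂ := by
      rw [← himg S₁ f₁, ← himg S₂ f₂, heq]
    subst hS
    have hf : f₁ = f₂ := by
      funext a ha
      have hmem : ((a, f₁ a ha) : Fin k × Fin t) ∈
          S₁.attach.image (fun b => ((b.1, f₂ b.1 b.2) : Fin k × Fin t)) := by
        rw [← heq]
        exact Finset.mem_image.2 ⟨⟨a, ha⟩, Finset.mem_attach _ _, rfl⟩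
      obtain ⟨b, -, hb⟩ := Finset.mem_image.1 hmem
      obtain ⟨hb1, hb2⟩ := Prod.mk.injEq .. ▸ hb
      cases Prod.ext_iff.1 hb with
      | intro h1 h2 =>
        simp only at h1 h2
        subst h1
        exact h2.symm ▸ rfl
    rw [hf]
  · -- surjective
    rintro e he
    simp only [Finset.mem_filter, Finset.mem_powersetCard] at he
    obtain ⟨⟨-, hcard⟩, himg⟩ := he
    have hinj : Set.InjOn Prod.fst (e : Set (Fin k × Fin t)) :=
      Finset.injOn_of_card_image_eq (by rw [himg, hcard])
    set S := e.image Prod.fst with hSdef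
    have huniq : ∀ a ∈ S, ∃! v, v ∈ e ∧ v.1 = a := by
      intro a ha
      obtain ⟨v, hv, hva⟩ := Finset.mem_image.1 ha
      exact ⟨v, ⟨hv, hva⟩, fun w ⟨hw, hwa⟩ => hinj hw hv (by rw [hwa, hva])⟩
    refine ⟨⟨S, fun a ha => (e.choose (fun v => v.1 = a) (huniq a ha)).2⟩,
      ?_, ?_⟩
    · simp only [Finset.mem_sigma, Finset.mem_powersetCard]
      exact ⟨⟨Finset.subset_univ _, himg⟩, by simp [Finset.mem_pi]⟩
    · simp only
      apply Finset.Subset.antisymm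
      · intro v hv
        obtain ⟨a, -, rfl⟩ := Finset.mem_image.1 hv
        have h1 := Finset.choose_mem (fun v => v.1 = a.1) e (huniq a.1 a.2)
        have h2 := Finset.choose_property (fun v => v.1 = a.1) e (huniq a.1 a.2)
        have heq2 : ((a.1 : Fin k), (e.choose (fun v => v.1 = a.1) (huniq a.1 a.2)).2)
            = e.choose (fun v => v.1 = a.1) (huniq a.1 a.2) := Prod.ext h2.symm rfl
        rw [heq2]; exact h1
      · intro v hv
        have haS : v.1 ∈ S := Finset.mem_image_of_mem _ hv
        refine Finset.mem_image.2 ⟨⟨v.1, haS⟩, Finset.mem_attach _ _, ?_⟩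
        have h1 := Finset.choose_mem (fun w => w.1 = v.1) e (huniq v.1 haS)
        have h2 := Finset.choose_property (fun w => w.1 = v.1) e (huniq v.1 haS)
        have : e.choose (fun w => w.1 = v.1) (huniq v.1 haS) = v := hinj h1 hv h2
        simp only
        rw [this]
  · -- values
    rintro ⟨S, f⟩ hz
    simp only
    rw [Finset.prod_image]
    intro a _ b _ hab
    exact Subtype.ext (congrArg Prod.fst hab)


variable {V : Type*} [Fintype V]

lemma sum_abs_rpow_eq_one {p : ℝ} (hp : 0 < p) {x : V → ℝ} (hx : lpNorm p x = 1) :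
    ∑ i, |x i| ^ p = 1 := by
  have h0 : 0 ≤ ∑ i, |x i| ^ p :=
    Finset.sum_nonneg fun i _ => Real.rpow_nonneg (abs_nonneg _) _
  have h1 : ((∑ i, |x i| ^ p) ^ (1 / p) : ℝ) ^ p = 1 ^ p := by
    rw [show ((∑ i, |x i| ^ p) ^ (1 / p) : ℝ) = 1 from hx]
  rwa [← Real.rpow_mul h0, one_div, inv_mul_cancel₀ hp.ne', Real.rpow_one,
    Real.one_rpow] at h1

lemma abs_le_one_of_unit {p : ℝ} (hp : 0 < p) {x : V → ℝ} (hx : lpNorm p x = 1) (i : V) :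
    |x i| ≤ 1 := by
  have hs := sum_abs_rpow_eq_one hp hx
  have h1 : |x i| ^ p ≤ 1 := by
    rw [← hs]
    exact Finset.single_le_sum (fun j _ => Real.rpow_nonneg (abs_nonneg _) _) (mem_univ i)
  by_contra h
  push_neg at h
  have h2 : (1 : ℝ) ^ p < |x i| ^ p := Real.rpow_lt_rpow (by norm_num) h hp
  rw [Real.one_rpow] at h2
  linarith

lemma polyForm_abs_le (r : ℕ) (E : Finset (Finset V)) {x : V → ℝ} (hx1 : ∀ i, |x i| ≤ 1) :
    |polyForm r E (fun _ => 1) x| ≤ (r.factorial : ℝ) * E.card := by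
  rw [polyForm, abs_mul, abs_of_nonneg (by positivity : (0:ℝ) ≤ (r.factorial : ℝ))]
  have h1 : |∑ e ∈ E, (fun _ => (1:ℝ)) e * ∏ i ∈ e, x i| ≤ (E.card : ℝ) := by
    calc |∑ e ∈ E, (fun _ => (1:ℝ)) e * ∏ i ∈ e, x i|
        ≤ ∑ e ∈ E, |(fun _ => (1:ℝ)) e * ∏ i ∈ e, x i| := Finset.abs_sum_le_sum_abs _ _
      _ ≤ ∑ e ∈ E, 1 := by
          refine Finset.sum_le_sum fun e _ => ?_
          simp only [one_mul, abs_prod]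
          exact Finset.prod_le_one (fun i _ => abs_nonneg _) (fun i _ => hx1 i)
      _ = (E.card : ℝ) := by simp
  have hfac : (0:ℝ) ≤ (r.factorial : ℝ) := by positivity
  calc (r.factorial : ℝ) * |∑ e ∈ E, (fun _ => (1:ℝ)) e * ∏ i ∈ e, x i|
      ≤ (r.factorial : ℝ) * (E.card : ℝ) := by
        exact mul_le_mul_of_nonneg_left h1 hfac

lemma bddBelow_vals (r : ℕ) (p : ℝ) (hp : 0 < p) (E : Finset (Finset V)) :
    BddBelow {v : ℝ | ∃ x : V → ℝ, lpNorm p x = 1 ∧ polyForm r E (fun _ => 1) x = v} := by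
  refine ⟨-((r.factorial : ℝ) * E.card), ?_⟩
  rintro v ⟨x, hx, rfl⟩
  have := polyForm_abs_le r E (fun i => abs_le_one_of_unit hp hx i)
  linarith [abs_le.1 this]

lemma lamMin_le_polyForm (r : ℕ) (p : ℝ) (hp : 0 < p) (E : Finset (Finset V))
    {x : V → ℝ} (hx : lpNorm p x = 1) :
    lamMin r p E (fun _ => 1) ≤ polyForm r E (fun _ => 1) x :=
  csInf_le (bddBelow_vals r p hp E) ⟨x, hx, rfl⟩

lemma lpNorm_smul (p : ℝ) (hp : 0 < p) (c : ℝ) (x : V → ℝ) :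
    lpNorm p (fun i => c * x i) = |c| * lpNorm p x := by
  unfold lpNorm
  have h1 : ∀ i : V, |c * x i| ^ p = |c| ^ p * |x i| ^ p := fun i => by
    rw [abs_mul, Real.mul_rpow (abs_nonneg _) (abs_nonneg _)]
  simp only [h1]
  rw [← Finset.mul_sum,
    Real.mul_rpow (Real.rpow_nonneg (abs_nonneg _) _)
      (Finset.sum_nonneg fun i _ => Real.rpow_nonneg (abs_nonneg _) _),
    ← Real.rpow_mul (abs_nonneg c), mul_one_div_cancel hp.ne', Real.rpow_one]

lemma polyForm_smul (r : ℕ) (E : Finset (Finset V)) (hE : ∀ e ∈ E, e.card = r)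
    (c : ℝ) (x : V → ℝ) :
    polyForm r E (fun _ => 1) (fun i => c * x i) = c ^ r * polyForm r E (fun _ => 1) x := by
  unfold polyForm
  simp only [one_mul]
  have h1 : ∑ e ∈ E, ∏ i ∈ e, (c * x i) = ∑ e ∈ E, c ^ r * ∏ i ∈ e, x i :=
    Finset.sum_congr rfl fun e he => by
      rw [Finset.prod_mul_distrib, Finset.prod_const, hE e he]
  rw [h1, ← Finset.mul_sum]
  ring

lemma sum_pow_bound {t : ℕ} (ht : 1 ≤ t) {p : ℝ} (hp : 1 ≤ p) (g : Fin t → ℝ) :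
    |∑ j, g j| ^ p ≤ (t : ℝ) ^ (p - 1) * ∑ j, |g j| ^ p := by
  have ht0 : (0:ℝ) < t := by exact_mod_cast Nat.lt_of_lt_of_le Nat.zero_lt_one ht
  have h1 : |∑ j, g j| ≤ ∑ j, |g j| := Finset.abs_sum_le_sum_abs _ _
  have h2 : |∑ j, g j| ^ p ≤ (∑ j, |g j|) ^ p :=
    Real.rpow_le_rpow (abs_nonneg _) h1 (by linarith)
  refine h2.trans ?_
  have key := Real.rpow_arith_mean_le_arith_mean_rpow univ (fun _ => ((t:ℝ))⁻¹)
    (fun j => |g j|) (fun _ _ => by positivity)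
    (by rw [Finset.sum_const, Finset.card_univ, Fintype.card_fin, nsmul_eq_mul]
        field_simp)
    (fun _ _ => abs_nonneg _) hp
  rw [← Finset.mul_sum, ← Finset.mul_sum,
    Real.mul_rpow (by positivity) (Finset.sum_nonneg fun _ _ => abs_nonneg _),
    Real.inv_rpow ht0.le] at key
  calc (∑ j, |g j|) ^ p
      = (t:ℝ) ^ p * (((t:ℝ) ^ p)⁻¹ * (∑ j, |g j|) ^ p) := by
        rw [← mul_assoc, mul_inv_cancel₀ (by positivity : ((t:ℝ) ^ p) ≠ 0), one_mul]
    _ ≤ (t:ℝ) ^ p * (((t:ℝ))⁻¹ * ∑ j, |g j| ^ p) :=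
        mul_le_mul_of_nonneg_left key (Real.rpow_nonneg ht0.le _)
    _ = (t:ℝ) ^ (p - 1) * ∑ j, |g j| ^ p := by
        rw [Real.rpow_sub ht0, Real.rpow_one]
        ring

lemma exists_unit (p : ℝ) (hp : 0 < p) [Nonempty V] [DecidableEq V] :
    ∃ x : V → ℝ, lpNorm p x = 1 := by
  obtain ⟨i0⟩ := (inferInstance : Nonempty V)
  refine ⟨fun i => if i = i0 then 1 else 0, ?_⟩
  unfold lpNorm
  have h1 : ∀ i : V, |if i = i0 then (1:ℝ) else 0| ^ p = if i = i0 then 1 else 0 := fun i => by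
    by_cases h : i = i0 <;> simp [h, Real.zero_rpow hp.ne']
  simp only [h1]
  rw [Finset.sum_ite_eq' univ i0 (fun _ => (1:ℝ))]
  simp

lemma vals_nonempty (r : ℕ) (p : ℝ) (hp : 0 < p) (E : Finset (Finset V))
    [Nonempty V] [DecidableEq V] :
    {v : ℝ | ∃ x : V → ℝ, lpNorm p x = 1 ∧ polyForm r E (fun _ => 1) x = v}.Nonempty := by
  obtain ⟨x, hx⟩ := exists_unit (V := V) p hp
  exact ⟨_, x, hx, rfl⟩

lemma lamMinK_nonpos (r k : ℕ) (p : ℝ) (hr2 : 2 ≤ r) (hkr : r ≤ k) (hp0 : 0 < p) :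
    lamMin r p (completeEdges r k) (fun _ => 1) ≤ 0 := by
  classical
  haveI : NeZero k := ⟨by omega⟩
  have hrR : (0:ℝ) < r := by exact_mod_cast (by omega : 0 < r)
  set c : ℝ := (r : ℝ) ^ (-(1/p)) with hc
  have hcpos : 0 < c := Real.rpow_pos_of_pos hrR _
  set S₀ : Finset (Fin k) := univ.filter (fun i => (i : ℕ) < r) with hS0
  have hfm : (univ : Finset (Fin r)).map ⟨Fin.castLE hkr, Fin.castLE_injective hkr⟩ = S₀ := by
    ext i
    simp only [hS0, mem_map, mem_filter, mem_univ, true_and, Function.Embedding.coeFn_mk]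
    constructor
    · rintro ⟨j, rfl⟩; exact j.isLt
    · intro h; exact ⟨⟨(i : ℕ), h⟩, Fin.ext rfl⟩
  have hcard : S₀.card = r := by
    rw [← hfm, Finset.card_map, Finset.card_univ, Fintype.card_fin]
  set x : Fin k → ℝ := fun i => if (i:ℕ) < r then (if (i:ℕ) = 0 then -c else c) else 0 with hx
  have habs : ∀ i : Fin k, |x i| ^ p = if (i:ℕ) < r then c ^ p else 0 := by
    intro i
    by_cases h : (i:ℕ) < r
    · have hr0 : 0 < r := by omega
      by_cases h0 : (i:ℕ) = 0 <;>
        simp [hx, h, h0, abs_of_pos hcpos, abs_neg, hr0, -Fin.val_eq_zero_iff]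
    · simp [hx, h, Real.zero_rpow hp0.ne']
  have hcp : c ^ p = (r:ℝ)⁻¹ := by
    rw [hc, ← Real.rpow_mul hrR.le]
    rw [show (-(1/p)) * p = -1 by field_simp]
    rw [Real.rpow_neg_one]
  have hxunit : lpNorm p x = 1 := by
    unfold lpNorm
    simp only [habs]
    rw [← Finset.sum_filter, ← hS0, Finset.sum_const, hcard, nsmul_eq_mul, hcp,
      mul_inv_cancel₀ (by positivity : (r:ℝ) ≠ 0), Real.one_rpow]
  have hmem : S₀ ∈ completeEdges r k :=
    Finset.mem_powersetCard.2 ⟨Finset.subset_univ _, hcard⟩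
  have h0mem : (0 : Fin k) ∈ S₀ := by
    simp [hS0, Fin.val_zero]
    omega
  have hprod : ∏ i ∈ S₀, x i = -(c ^ r) := by
    rw [← Finset.mul_prod_erase S₀ x h0mem]
    have hx0 : x 0 = -c := by simp [hx, Fin.val_zero]; omega
    have hrest : ∏ i ∈ S₀.erase 0, x i = c ^ (r - 1) := by
      rw [Finset.prod_congr rfl (fun i hi => ?_), Finset.prod_const,
        Finset.card_erase_of_mem h0mem, hcard]
      obtain ⟨hne, hiS⟩ := Finset.mem_erase.1 hi
      have hlt : (i:ℕ) < r := (Finset.mem_filter.1 hiS).2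
      have hnz : (i:ℕ) ≠ 0 := fun h => hne (by
        apply Fin.ext
        simp [h, Fin.val_zero])
      simp [hx, hlt, hnz, hne]
    rw [hx0, hrest]
    have h5 : c ^ (r - 1) * c = c ^ r := by
      rw [← pow_succ]; congr 1; omega
    calc -c * c ^ (r - 1) = -(c ^ (r - 1) * c) := by ring
      _ = -(c ^ r) := by rw [h5]
  have hPx : polyForm r (completeEdges r k) (fun _ => 1) x
      = (r.factorial : ℝ) * (-(c ^ r)) := by
    unfold polyForm
    congr 1
    rw [Finset.sum_eq_single_of_mem S₀ hmem]
    · rw [one_mul, hprod]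
    · intro e he hne
      have hcarde : e.card = r := (Finset.mem_powersetCard.1 he).2
      have : ∃ i ∈ e, i ∉ S₀ := by
        by_contra hcon
        push_neg at hcon
        exact hne (Finset.eq_of_subset_of_card_le hcon (by rw [hcard, hcarde]))
      obtain ⟨i, hie, hiS⟩ := this
      have hge : ¬ (i:ℕ) < r := fun h => hiS (Finset.mem_filter.2 ⟨mem_univ _, h⟩)
      rw [one_mul]
      exact Finset.prod_eq_zero hie (by simp [hx, hge])
  have hle := lamMin_le_polyForm r p hp0 (completeEdges r k) hxunit
  rw [hPx] at hle
  have : (r.factorial : ℝ) * (-(c ^ r)) ≤ 0 := by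
    have h1 : (0:ℝ) ≤ (r.factorial : ℝ) * c ^ r := by positivity
    linarith
  linarith

end LamMinAux

/-- Equation (10) of the paper: for `r ≥ 2` even, `k ≥ r`, `p ≥ r`, and the complete
regular `k`-partite `r`-graph `G` with parts of size `t ≥ 1`:
`λ_min^(p)(G) = t^{r - r/p} · λ_min^(p)(K_k^r)`. -/
theorem lamMin_multipartite (r k t : ℕ) (p : ℝ)
    (hr2 : 2 ≤ r) (hre : Even r) (hkr : r ≤ k) (hp : (r : ℝ) ≤ p) (ht : 1 ≤ t) :
    lamMin r p (multiEdges r k t) (fun _ => 1) =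
      (t : ℝ) ^ ((r : ℝ) - (r : ℝ) / p) *
        lamMin r p (completeEdges r k) (fun _ => 1) := by
  classical
  open LamMinAux in
  have hr0 : 0 < r := by omega
  have hrR : (0:ℝ) < r := by exact_mod_cast hr0
  have hp0 : 0 < p := lt_of_lt_of_le hrR hp
  have hp1 : 1 ≤ p := by
    have : (2:ℝ) ≤ (r:ℝ) := by exact_mod_cast hr2
    linarith
  have ht0 : (0:ℝ) < t := by exact_mod_cast (by omega : 0 < t)
  haveI : NeZero k := ⟨by omega⟩
  haveI : Nonempty (Fin k) := ⟨0⟩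
  haveI : Nonempty (Fin k × Fin t) := ⟨(0, ⟨0, by omega⟩)⟩
  set c : ℝ := (t:ℝ) ^ ((r : ℝ) - (r : ℝ) / p) with hcdef
  have hcpos : 0 < c := Real.rpow_pos_of_pos ht0 _
  have hcardK : ∀ e ∈ completeEdges r k, e.card = r := fun e he =>
    (Finset.mem_powersetCard.1 he).2
  have hK0 : lamMin r p (completeEdges r k) (fun _ => 1) ≤ 0 :=
    LamMinAux.lamMinK_nonpos r k p hr2 hkr hp0
  set SK := {v : ℝ | ∃ x : Fin k → ℝ, lpNorm p x = 1 ∧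
    polyForm r (completeEdges r k) (fun _ => 1) x = v} with hSK
  set SG := {v : ℝ | ∃ y : Fin k × Fin t → ℝ, lpNorm p y = 1 ∧
    polyForm r (multiEdges r k t) (fun _ => 1) y = v} with hSG
  have hKdef : lamMin r p (completeEdges r k) (fun _ => 1) = sInf SK := rfl
  have hGdef : lamMin r p (multiEdges r k t) (fun _ => 1) = sInf SG := rfl
  have hKne : SK.Nonempty := LamMinAux.vals_nonempty r p hp0 _
  have hGne : SG.Nonempty := LamMinAux.vals_nonempty r p hp0 _
  -- lower bound
  have hlow : ∀ v ∈ SG, c * lamMin r p (completeEdges r k) (fun _ => 1) ≤ v := by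
    rintro v ⟨y, hy, rfl⟩
    set s : Fin k → ℝ := fun i => ∑ j, y (i, j) with hsdef
    have hform : polyForm r (multiEdges r k t) (fun _ => 1) y
        = polyForm r (completeEdges r k) (fun _ => 1) s := by
      unfold polyForm
      simp only [one_mul]
      rw [LamMinAux.multi_sum_eq]
    have hsum : ∑ i, |s i| ^ p ≤ (t:ℝ) ^ (p - 1) := by
      calc ∑ i, |s i| ^ p
          ≤ ∑ i : Fin k, (t:ℝ) ^ (p-1) * ∑ j, |y (i,j)| ^ p :=
            Finset.sum_le_sum fun i _ => LamMinAux.sum_pow_bound ht hp1 (fun j => y (i, j))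
        _ = (t:ℝ) ^ (p-1) * ∑ i : Fin k, ∑ j, |y (i,j)| ^ p := by rw [← Finset.mul_sum]
        _ = (t:ℝ) ^ (p-1) := by
            have h7 : ∑ i : Fin k, ∑ j : Fin t, |y (i, j)| ^ p
                = ∑ v : Fin k × Fin t, |y v| ^ p :=
              (Fintype.sum_prod_type (f := fun v : Fin k × Fin t => |y v| ^ p)).symm
            rw [h7, LamMinAux.sum_abs_rpow_eq_one hp0 hy, mul_one]
    have hsnn : 0 ≤ ∑ i, |s i| ^ p :=
      Finset.sum_nonneg fun i _ => Real.rpow_nonneg (abs_nonneg _) _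
    have hN : lpNorm p s ≤ (t:ℝ) ^ ((p-1)/p) := by
      unfold lpNorm
      have h2 := Real.rpow_le_rpow hsnn hsum (by positivity : (0:ℝ) ≤ 1/p)
      rwa [← Real.rpow_mul ht0.le, mul_one_div] at h2
    have hNnn : 0 ≤ lpNorm p s := Real.rpow_nonneg hsnn _
    have hNr : (lpNorm p s) ^ r ≤ c := by
      calc (lpNorm p s) ^ r ≤ ((t:ℝ) ^ ((p-1)/p)) ^ r :=
            pow_le_pow_left₀ hNnn hN r
        _ = c := by
            rw [← Real.rpow_natCast ((t:ℝ) ^ ((p-1)/p)) r, ← Real.rpow_mul ht0.le, hcdef]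
            congr 1
            field_simp
    have hPs : (lpNorm p s) ^ r * lamMin r p (completeEdges r k) (fun _ => 1)
        ≤ polyForm r (completeEdges r k) (fun _ => 1) s := by
      rcases eq_or_lt_of_le hNnn with hN0 | hN0
      · have hsum0 : ∑ i, |s i| ^ p = 0 := by
          have h1 : ((∑ i, |s i| ^ p) ^ (1/p) : ℝ) = 0 := hN0.symm
          have h2 := congrArg (fun a : ℝ => a ^ p) h1
          rwa [← Real.rpow_mul hsnn, one_div, inv_mul_cancel₀ hp0.ne', Real.rpow_one,
            Real.zero_rpow hp0.ne'] at h2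
        have hs0 : ∀ i, s i = 0 := by
          intro i
          have h3 := (Finset.sum_eq_zero_iff_of_nonneg
            (fun j _ => Real.rpow_nonneg (abs_nonneg _) _)).1 hsum0 i (mem_univ i)
          have habs : |s i| = 0 := by
            by_contra h
            have : (0:ℝ) < |s i| := lt_of_le_of_ne (abs_nonneg _) (Ne.symm h)
            exact absurd h3 (ne_of_gt (Real.rpow_pos_of_pos this p))
          exact abs_eq_zero.1 habs
        have hP0 : polyForm r (completeEdges r k) (fun _ => 1) s = 0 := by
          unfold polyForm
          rw [Finset.sum_eq_zero, mul_zero]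
          intro e he
          obtain ⟨i, hi⟩ := Finset.card_pos.1 (by rw [hcardK e he]; omega : 0 < e.card)
          rw [one_mul]
          exact Finset.prod_eq_zero hi (hs0 i)
        rw [hP0, ← hN0, zero_pow hr0.ne', zero_mul]
      · set N := lpNorm p s with hNdef
        have hu : lpNorm p (fun i => N⁻¹ * s i) = 1 := by
          rw [LamMinAux.lpNorm_smul p hp0, abs_of_pos (inv_pos.2 hN0), ← hNdef,
            inv_mul_cancel₀ hN0.ne']
        have hle := LamMinAux.lamMin_le_polyForm r p hp0 (completeEdges r k) hu
        rw [LamMinAux.polyForm_smul r _ hcardK] at hle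
        have h4 := mul_le_mul_of_nonneg_left hle (pow_nonneg hNnn r)
        rwa [← mul_assoc, ← mul_pow, mul_inv_cancel₀ hN0.ne', one_pow, one_mul] at h4
    calc c * lamMin r p (completeEdges r k) (fun _ => 1)
        ≤ (lpNorm p s) ^ r * lamMin r p (completeEdges r k) (fun _ => 1) :=
          mul_le_mul_of_nonpos_right hNr hK0
      _ ≤ polyForm r (completeEdges r k) (fun _ => 1) s := hPs
      _ = polyForm r (multiEdges r k t) (fun _ => 1) y := hform.symm
  have hlow' : c * lamMin r p (completeEdges r k) (fun _ => 1)
      ≤ lamMin r p (multiEdges r k t) (fun _ => 1) := by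
    rw [hGdef]
    exact le_csInf hGne hlow
  -- upper bound
  have hup : lamMin r p (multiEdges r k t) (fun _ => 1)
      ≤ c * lamMin r p (completeEdges r k) (fun _ => 1) := by
    have h1 : ∀ v ∈ SK, c⁻¹ * lamMin r p (multiEdges r k t) (fun _ => 1) ≤ v := by
      rintro v ⟨x, hx, rfl⟩
      set T1 : ℝ := (t:ℝ) ^ (-(1/p)) with hT1
      have hT1pos : 0 < T1 := Real.rpow_pos_of_pos ht0 _
      have hT1p : T1 ^ p = ((t:ℝ))⁻¹ := by
        rw [hT1, ← Real.rpow_mul ht0.le, show (-(1/p)) * p = -1 by field_simp,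
          Real.rpow_neg_one]
      set y : Fin k × Fin t → ℝ := fun v => x v.1 * T1 with hy
      have hyn : lpNorm p y = 1 := by
        unfold lpNorm
        have h2 : ∀ v : Fin k × Fin t, |y v| ^ p = |x v.1| ^ p * ((t:ℝ))⁻¹ := fun v => by
          rw [hy]
          simp only
          rw [abs_mul, Real.mul_rpow (abs_nonneg _) (abs_nonneg _),
            abs_of_pos hT1pos, hT1p]
        simp only [h2]
        rw [Fintype.sum_prod_type]
        have h3 : ∀ i : Fin k, ∑ _j : Fin t, |x i| ^ p * ((t:ℝ))⁻¹ = |x i| ^ p := by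
          intro i
          rw [Finset.sum_const, Finset.card_univ, Fintype.card_fin, nsmul_eq_mul]
          field_simp
        rw [Finset.sum_congr rfl (fun i _ => h3 i),
          LamMinAux.sum_abs_rpow_eq_one hp0 hx, Real.one_rpow]
      have htT1 : (t:ℝ) * T1 = (t:ℝ) ^ ((1:ℝ) - 1/p) := by
        rw [show (1:ℝ) - 1/p = 1 + (-(1/p)) by ring, Real.rpow_add ht0, Real.rpow_one, hT1]
      have htT1r : ((t:ℝ) * T1) ^ r = c := by
        rw [htT1, ← Real.rpow_natCast ((t:ℝ) ^ ((1:ℝ) - 1/p)) r, ← Real.rpow_mul ht0.le,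
          hcdef]
        congr 1
        field_simp
      have hform : polyForm r (multiEdges r k t) (fun _ => 1) y
          = c * polyForm r (completeEdges r k) (fun _ => 1) x := by
        unfold polyForm
        simp only [one_mul]
        rw [LamMinAux.multi_sum_eq]
        have h4 : ∀ S ∈ completeEdges r k,
            ∏ i ∈ S, (∑ j : Fin t, y (i, j)) = c * ∏ i ∈ S, x i := by
          intro S hS
          have h5 : ∀ i : Fin k, (∑ j : Fin t, y (i, j)) = ((t:ℝ) * T1) * x i := by
            intro i
            rw [hy]
            simp only
            rw [Finset.sum_const, Finset.card_univ, Fintype.card_fin, nsmul_eq_mul]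
            ring
          rw [Finset.prod_congr rfl (fun i _ => h5 i), Finset.prod_mul_distrib,
            Finset.prod_const, hcardK S hS, htT1r]
        rw [Finset.sum_congr rfl h4, ← Finset.mul_sum]
        ring
      have h6 := LamMinAux.lamMin_le_polyForm r p hp0 (multiEdges r k t) hyn
      rw [hform] at h6
      calc c⁻¹ * lamMin r p (multiEdges r k t) (fun _ => 1)
          ≤ c⁻¹ * (c * polyForm r (completeEdges r k) (fun _ => 1) x) :=
            mul_le_mul_of_nonneg_left h6 (inv_pos.2 hcpos).le
        _ = polyForm r (completeEdges r k) (fun _ => 1) x := by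
            rw [← mul_assoc, inv_mul_cancel₀ hcpos.ne', one_mul]
    have h2 : c⁻¹ * lamMin r p (multiEdges r k t) (fun _ => 1)
        ≤ lamMin r p (completeEdges r k) (fun _ => 1) := by
      rw [hKdef]
      exact le_csInf hKne h1
    have h3 := mul_le_mul_of_nonneg_left h2 hcpos.le
    rwa [← mul_assoc, mul_inv_cancel₀ hcpos.ne', one_mul] at h3
  exact le_antisymm hup hlow'
end

section
/- Let r ≥ 2 be an even integer, k ≥ r an integer and p ≥ r a real number. Let G be the complete regular k-partite r-graph with k parts each of size t ≥ 1. Then λ^(p)(G) = t^{r−r/p} · λ^(p)(K_k^r). -/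
open Finset

lemma lpNorm_sum_eq {V : Type*} [Fintype V] {p : ℝ} (hp : 0 < p) {x : V → ℝ}
    (h : lpNorm p x = 1) : ∑ i, |x i| ^ p = 1 := by
  have hS : (0:ℝ) ≤ ∑ i, |x i| ^ p :=
    sum_nonneg fun i _ => Real.rpow_nonneg (abs_nonneg _) _
  have h2 : (∑ i, |x i| ^ p) = ((∑ i, |x i| ^ p) ^ (1/p)) ^ p := by
    rw [← Real.rpow_mul hS, one_div_mul_cancel hp.ne', Real.rpow_one]
  rw [h2, lpNorm] at *
  rw [h, Real.one_rpow]

lemma lpNorm_const_mul {V : Type*} [Fintype V] {p : ℝ} (hp : 0 < p) {c : ℝ} (hc : 0 ≤ c)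
    (x : V → ℝ) : lpNorm p (fun i => c * x i) = c * lpNorm p x := by
  unfold lpNorm
  have h1 : ∀ i : V, |c * x i| ^ p = c ^ p * |x i| ^ p := fun i => by
    rw [abs_mul, abs_of_nonneg hc, Real.mul_rpow hc (abs_nonneg _)]
  simp only [h1, ← Finset.mul_sum]
  rw [Real.mul_rpow (Real.rpow_nonneg hc p)
    (sum_nonneg fun i _ => Real.rpow_nonneg (abs_nonneg _) _),
    ← Real.rpow_mul hc, mul_one_div_cancel hp.ne', Real.rpow_one]

lemma lpNorm_pos {V : Type*} [Fintype V] {p : ℝ} (hp : 0 < p) {x : V → ℝ}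
    {i : V} (hi : x i ≠ 0) : 0 < lpNorm p x := by
  apply Real.rpow_pos_of_pos
  have h1 : 0 < |x i| ^ p := Real.rpow_pos_of_pos (abs_pos.mpr hi) _
  have h2 : |x i| ^ p ≤ ∑ j, |x j| ^ p :=
    Finset.single_le_sum (f := fun j => |x j| ^ p)
      (fun j _ => Real.rpow_nonneg (abs_nonneg _) _) (mem_univ i)
  linarith

lemma polyForm_const_mul (r : ℕ) {V : Type*} (E : Finset (Finset V))
    (hE : ∀ e ∈ E, e.card = r) (c : ℝ) (x : V → ℝ) :
    polyForm r E (fun _ => 1) (fun i => c * x i) = c ^ r * polyForm r E (fun _ => 1) x := by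
  unfold polyForm
  have h : ∀ e ∈ E, (1:ℝ) * ∏ i ∈ e, (c * x i) = c ^ r * ((1:ℝ) * ∏ i ∈ e, x i) := by
    intro e he
    rw [Finset.prod_mul_distrib, Finset.prod_const, hE e he]
    ring
  rw [Finset.sum_congr rfl h, ← Finset.mul_sum]
  ring

lemma zero_mem_spectrum {V : Type*} [Fintype V] [Nonempty V] {p : ℝ} (hp : 0 < p)
    (r : ℕ) (hr : 2 ≤ r) (E : Finset (Finset V)) (hE : ∀ e ∈ E, e.card = r) :
    (0:ℝ) ∈ {s | ∃ x : V → ℝ, lpNorm p x = 1 ∧ polyForm r E (fun _ => 1) x = s} := by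
  classical
  obtain ⟨v0⟩ := ‹Nonempty V›
  refine ⟨fun v => if v = v0 then 1 else 0, ?_, ?_⟩
  · unfold lpNorm
    have h1 : ∀ i : V, |if i = v0 then (1:ℝ) else 0| ^ p = if i = v0 then 1 else 0 := by
      intro i
      split <;> simp [Real.zero_rpow hp.ne']
    rw [Finset.sum_congr rfl (fun i _ => h1 i), Finset.sum_ite_eq' _ v0 (fun _ => (1:ℝ))]
    simp [Real.one_rpow]
  · unfold polyForm
    have h2 : ∀ e ∈ E, (1:ℝ) * ∏ i ∈ e, (if i = v0 then (1:ℝ) else 0) = 0 := by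
      intro e he
      obtain ⟨u, hu, hne⟩ : ∃ u ∈ e, u ≠ v0 := by
        by_contra hcon
        push_neg at hcon
        have hsub : e ⊆ {v0} := fun u hu => by simp [hcon u hu]
        have := Finset.card_le_card hsub
        rw [hE e he] at this
        simp at this
        omega
      rw [one_mul, Finset.prod_eq_zero hu (by simp [hne])]
    rw [Finset.sum_congr rfl h2]
    simp

lemma bddAbove_spectrum {V : Type*} [Fintype V] {p : ℝ} (hp : 0 < p) (r : ℕ)
    (E : Finset (Finset V)) :
    BddAbove {s | ∃ x : V → ℝ, lpNorm p x = 1 ∧ polyForm r E (fun _ => 1) x = s} := by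
  refine ⟨(r.factorial : ℝ) * E.card, ?_⟩
  rintro s ⟨x, hx, rfl⟩
  have hsum := lpNorm_sum_eq hp hx
  have habs : ∀ i, |x i| ≤ 1 := by
    intro i
    have h1 : |x i| ^ p ≤ 1 := by
      rw [← hsum]
      exact Finset.single_le_sum (f := fun j => |x j| ^ p)
        (fun j _ => Real.rpow_nonneg (abs_nonneg _) _) (mem_univ i)
    have heq : (|x i| ^ p) ^ (1/p) = |x i| := by
      rw [← Real.rpow_mul (abs_nonneg _), mul_one_div_cancel hp.ne', Real.rpow_one]
    calc |x i| = (|x i| ^ p) ^ (1/p) := heq.symm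
      _ ≤ (1:ℝ) ^ (1/p) :=
        Real.rpow_le_rpow (Real.rpow_nonneg (abs_nonneg _) _) h1 (by positivity)
      _ = 1 := Real.one_rpow _
  unfold polyForm
  have h : ∀ e ∈ E, (1:ℝ) * ∏ i ∈ e, x i ≤ 1 := by
    intro e he
    calc (1:ℝ) * ∏ i ∈ e, x i ≤ |∏ i ∈ e, x i| := by rw [one_mul]; exact le_abs_self _
      _ = ∏ i ∈ e, |x i| := Finset.abs_prod _ _
      _ ≤ 1 := Finset.prod_le_one (fun i _ => abs_nonneg _) (fun i _ => habs i)
  calc (r.factorial : ℝ) * ∑ e ∈ E, (1:ℝ) * ∏ i ∈ e, x i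
      ≤ (r.factorial : ℝ) * ∑ e ∈ E, (1:ℝ) := by
        apply mul_le_mul_of_nonneg_left (Finset.sum_le_sum h) (by positivity)
    _ = (r.factorial : ℝ) * E.card := by simp


def transversals (t : ℕ) {k : ℕ} (S : Finset (Fin k)) : Finset (Finset (Fin k × Fin t)) :=
  (univ : Finset (Fin k × Fin t)).powerset.filter
    (fun e => e.image Prod.fst = S ∧ e.card = S.card)

lemma mem_transversals {k t : ℕ} {S : Finset (Fin k)} {e : Finset (Fin k × Fin t)} :
    e ∈ transversals t S ↔ e.image Prod.fst = S ∧ e.card = S.card := by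
  simp [transversals]

lemma sum_transversals {k t : ℕ} (f : Fin k × Fin t → ℝ) (S : Finset (Fin k)) :
    ∑ e ∈ transversals t S, ∏ v ∈ e, f v = ∏ i ∈ S, ∑ j, f (i, j) := by
  classical
  induction S using Finset.induction_on with
  | empty =>
      have h : transversals t (∅ : Finset (Fin k)) = {∅} := by
        ext e
        simp only [mem_transversals, Finset.image_eq_empty, Finset.card_empty,
          Finset.card_eq_zero, Finset.mem_singleton]
        tauto
      simp [h]
  | @insert a S ha ih =>
      have key : transversals t (insert a S) =
          ((univ : Finset (Fin t)) ×ˢ transversals t S).image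
            (fun q => insert (a, q.1) q.2) := by
        ext e
        simp only [mem_image, mem_product, mem_univ, true_and, mem_transversals]
        constructor
        · rintro ⟨himg, hcard⟩
          have hcard' : (insert a S).card = S.card + 1 := card_insert_of_notMem ha
          have hinj : Set.InjOn Prod.fst (e : Set (Fin k × Fin t)) := by
            apply Finset.card_image_iff.mp
            rw [himg, hcard', hcard, hcard']
          obtain ⟨v, hv, hva⟩ : ∃ v ∈ e, v.1 = a := by
            have : a ∈ e.image Prod.fst := by rw [himg]; exact mem_insert_self a S
            simpa [mem_image] using this
          have hvother : ∀ u ∈ e, u ≠ v → u.1 ≠ a := by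
            intro u hu hne hua
            exact hne (hinj (by exact_mod_cast hu) (by exact_mod_cast hv) (by rw [hua, hva]))
          refine ⟨(v.2, e.erase v), ⟨?_, ?_⟩, ?_⟩
          · ext i
            simp only [mem_image, mem_erase]
            constructor
            · rintro ⟨u, ⟨hune, hue⟩, rfl⟩
              have : u.1 ∈ insert a S := by rw [← himg]; exact mem_image_of_mem _ hue
              rcases mem_insert.mp this with h | h
              · exact absurd h (hvother u hue hune)
              · exact h
            · intro hi
              have : i ∈ e.image Prod.fst := by rw [himg]; exact mem_insert_of_mem hi
              obtain ⟨u, hu, rfl⟩ := mem_image.mp this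
              refine ⟨u, ⟨?_, hu⟩, rfl⟩
              rintro rfl
              rw [hva] at hi; exact ha hi
          · rw [card_erase_of_mem hv, hcard, hcard']
            omega
          · have : (a, v.2) = v := by rw [← hva]
            rw [this, insert_erase hv]
        · rintro ⟨⟨j, e'⟩, ⟨himg, hcard⟩, rfl⟩
          have haj : (a, j) ∉ e' := by
            intro h
            have : a ∈ S := by rw [← himg]; exact mem_image_of_mem _ h
            exact ha this
          constructor
          · rw [image_insert, himg]
          · rw [card_insert_of_notMem haj, hcard, card_insert_of_notMem ha]
      rw [key]
      rw [Finset.sum_image ?hinj]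
      case hinj =>
        rintro ⟨j, e⟩ hje ⟨j', e'⟩ hje' heq
        simp only [Finset.mem_coe, mem_product, mem_univ, true_and, mem_transversals] at hje hje' heq
        have hfst : ∀ u ∈ e', u.1 ∈ S := by
          intro u hu; rw [← hje'.1]; exact mem_image_of_mem _ hu
        have hfst2 : ∀ u ∈ e, u.1 ∈ S := by
          intro u hu; rw [← hje.1]; exact mem_image_of_mem _ hu
        have hjj : j = j' := by
          have h1 : (a, j) ∈ insert (a, j') e' := by rw [← heq]; exact mem_insert_self _ _
          rcases mem_insert.mp h1 with h | h
          · exact (Prod.mk.injEq _ _ _ _ ▸ h).2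
          · exact absurd (hfst _ h) ha
        subst hjj
        have he : e = e' := by
          have h1 : (insert (a, j) e).erase (a, j) = (insert (a, j) e').erase (a, j) := by
            rw [heq]
          rwa [erase_insert (fun h => ha (hfst2 _ h)), erase_insert (fun h => ha (hfst _ h))] at h1
        rw [he]
      have hstep : ∀ q ∈ (univ : Finset (Fin t)) ×ˢ transversals t S,
          ∏ v ∈ insert (a, q.1) q.2, f v = f (a, q.1) * ∏ v ∈ q.2, f v := by
        rintro ⟨j, e⟩ hq
        simp only [mem_product, mem_univ, true_and, mem_transversals] at hq
        apply prod_insert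
        intro h
        have : a ∈ S := by rw [← hq.1]; exact mem_image_of_mem _ h
        exact ha this
      rw [Finset.sum_congr rfl hstep, Finset.sum_product, prod_insert ha, ← ih]
      simp_rw [← Finset.mul_sum]
      rw [← Finset.sum_mul]

lemma sum_multiEdges (r k t : ℕ) (f : Fin k × Fin t → ℝ) :
    ∑ e ∈ multiEdges r k t, ∏ v ∈ e, f v
      = ∑ S ∈ completeEdges r k, ∏ i ∈ S, ∑ j, f (i, j) := by
  classical
  rw [← Finset.sum_fiberwise_of_maps_to (g := fun e => e.image Prod.fst)
    (t := completeEdges r k) ?hmaps]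
  case hmaps =>
    intro e he
    obtain ⟨h1, h2⟩ := mem_filter.mp he
    exact mem_powersetCard_univ.mpr h2
  refine Finset.sum_congr rfl ?_
  intro S hS
  have hScard : S.card = r := mem_powersetCard_univ.mp hS
  have : (multiEdges r k t).filter (fun e => e.image Prod.fst = S) = transversals t S := by
    ext e
    simp only [mem_filter, multiEdges, mem_powersetCard_univ, mem_transversals]
    constructor
    · rintro ⟨⟨h1, _⟩, h3⟩
      exact ⟨h3, by rw [h1, hScard]⟩
    · rintro ⟨h1, h2⟩
      have hc : e.card = r := by rw [h2, hScard]
      exact ⟨⟨hc, by rw [h1, hScard]⟩, h1⟩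
  rw [this, sum_transversals]


/-- Equation (11) of the paper: for `r ≥ 2` even, `k ≥ r`, `p ≥ r`, and the complete
regular `k`-partite `r`-graph `G` with parts of size `t ≥ 1`:
`λ^(p)(G) = t^{r - r/p} · λ^(p)(K_k^r)`. -/
theorem lamMax_multipartite (r k t : ℕ) (p : ℝ)
    (hr2 : 2 ≤ r) (hre : Even r) (hkr : r ≤ k) (hp : (r : ℝ) ≤ p) (ht : 1 ≤ t) :
    lamMax r p (multiEdges r k t) (fun _ => 1) =
      (t : ℝ) ^ ((r : ℝ) - (r : ℝ) / p) *
        lamMax r p (completeEdges r k) (fun _ => 1) := by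
  classical
  have hr0 : 0 < r := by omega
  have hp1 : (1:ℝ) ≤ p := le_trans (by exact_mod_cast (by omega : 1 ≤ r)) hp
  have hp0 : 0 < p := lt_of_lt_of_le one_pos hp1
  have ht0 : (0:ℝ) < t := by exact_mod_cast Nat.lt_of_lt_of_le Nat.zero_lt_one ht
  have hk0 : 0 < k := by omega
  haveI : Nonempty (Fin k) := ⟨⟨0, hk0⟩⟩
  haveI : Nonempty (Fin t) := ⟨⟨0, by omega⟩⟩
  set c : ℝ := (t : ℝ) ^ ((r : ℝ) - (r : ℝ) / p) with hcdef
  have hcpos : 0 < c := Real.rpow_pos_of_pos ht0 _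
  -- the scaling constant m = t^(1 - 1/p), with m ^ r = c
  set m : ℝ := (t : ℝ) ^ ((1:ℝ) - 1 / p) with hmdef
  have hm0 : 0 < m := Real.rpow_pos_of_pos ht0 _
  have hmr : m ^ r = c := by
    rw [hmdef, hcdef, ← Real.rpow_natCast ((t:ℝ) ^ ((1:ℝ) - 1/p)) r,
      ← Real.rpow_mul ht0.le]
    congr 1
    ring
  -- edge cardinality facts
  have hEK : ∀ e ∈ completeEdges r k, e.card = r := fun e he =>
    mem_powersetCard_univ.mp he
  have hEM : ∀ e ∈ multiEdges r k t, e.card = r := fun e he =>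
    mem_powersetCard_univ.mp (mem_filter.mp he).1
  -- the spectra
  set KS := {s | ∃ x : Fin k → ℝ, lpNorm p x = 1 ∧
    polyForm r (completeEdges r k) (fun _ => 1) x = s} with hKSdef
  set MS := {s | ∃ y : Fin k × Fin t → ℝ, lpNorm p y = 1 ∧
    polyForm r (multiEdges r k t) (fun _ => 1) y = s} with hMSdef
  have h0K : (0:ℝ) ∈ KS := zero_mem_spectrum hp0 r hr2 _ hEK
  have h0M : (0:ℝ) ∈ MS := zero_mem_spectrum hp0 r hr2 _ hEM
  have hbK : BddAbove KS := bddAbove_spectrum hp0 r _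
  have hbM : BddAbove MS := bddAbove_spectrum hp0 r _
  have hKnn : 0 ≤ sSup KS := le_csSup hbK h0K
  have hMnn : 0 ≤ sSup MS := le_csSup hbM h0M
  -- key transfer identity
  have hPM : ∀ y : Fin k × Fin t → ℝ,
      polyForm r (multiEdges r k t) (fun _ => 1) y =
        polyForm r (completeEdges r k) (fun _ => 1) (fun i => ∑ j, y (i, j)) := by
    intro y
    unfold polyForm
    simp only [one_mul]
    rw [sum_multiEdges]
  have hlamM : lamMax r p (multiEdges r k t) (fun _ => 1) = sSup MS := rfl
  have hlamK : lamMax r p (completeEdges r k) (fun _ => 1) = sSup KS := rfl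
  rw [hlamM, hlamK]
  -- direction ≤
  have hle : sSup MS ≤ c * sSup KS := by
    refine csSup_le ⟨0, h0M⟩ ?_
    rintro s ⟨y, hy, rfl⟩
    rw [hPM y]
    set z : Fin k → ℝ := fun i => ∑ j, y (i, j) with hzdef
    by_cases hz0 : ∀ i, z i = 0
    · have : polyForm r (completeEdges r k) (fun _ => 1) z = 0 := by
        unfold polyForm
        have h : ∀ e ∈ completeEdges r k, (1:ℝ) * ∏ i ∈ e, z i = 0 := by
          intro e he
          obtain ⟨u, hu⟩ : e.Nonempty := Finset.card_pos.mp (by rw [hEK e he]; omega)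
          rw [one_mul, Finset.prod_eq_zero hu (hz0 u)]
        rw [Finset.sum_congr rfl h]
        simp
      rw [this]
      positivity
    · push_neg at hz0
      obtain ⟨i0, hi0⟩ := hz0
      have hn : 0 < lpNorm p z := lpNorm_pos hp0 hi0
      set n : ℝ := lpNorm p z with hndef
      -- bound on n
      have hynorm : ∑ v : Fin k × Fin t, |y v| ^ p = 1 := lpNorm_sum_eq hp0 hy
      have hterm : ∀ i : Fin k, |z i| ^ p ≤ (t:ℝ) ^ (p - 1) * ∑ j, |y (i, j)| ^ p := by
        intro i
        have h1 : |z i| ≤ ∑ j, |y (i, j)| := Finset.abs_sum_le_sum_abs _ _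
        have h2 : ∑ j : Fin t, |y (i, j)| ≤
            (t:ℝ) ^ (1 - p⁻¹) * (∑ j, |y (i, j)| ^ p) ^ p⁻¹ := by
          have := Real.inner_le_weight_mul_Lp_of_nonneg (Finset.univ : Finset (Fin t))
            hp1 (fun _ => (1:ℝ)) (fun j => |y (i, j)|) (fun _ => zero_le_one)
            (fun j => abs_nonneg _)
          simpa using this
        have h3 : |z i| ^ p ≤ ((t:ℝ) ^ (1 - p⁻¹) * (∑ j, |y (i, j)| ^ p) ^ p⁻¹) ^ p :=
          Real.rpow_le_rpow (abs_nonneg _) (h1.trans h2) hp0.le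
        have hA : (0:ℝ) ≤ ∑ j, |y (i, j)| ^ p :=
          sum_nonneg fun j _ => Real.rpow_nonneg (abs_nonneg _) _
        calc |z i| ^ p ≤ ((t:ℝ) ^ (1 - p⁻¹) * (∑ j, |y (i, j)| ^ p) ^ p⁻¹) ^ p := h3
          _ = (t:ℝ) ^ (p - 1) * ∑ j, |y (i, j)| ^ p := by
            rw [Real.mul_rpow (Real.rpow_nonneg ht0.le _) (Real.rpow_nonneg hA _),
              ← Real.rpow_mul ht0.le, ← Real.rpow_mul hA]
            rw [inv_mul_cancel₀ hp0.ne', Real.rpow_one]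
            congr 2
            field_simp
      have hzb : ∑ i, |z i| ^ p ≤ (t:ℝ) ^ (p - 1) := by
        calc ∑ i, |z i| ^ p ≤ ∑ i, (t:ℝ) ^ (p - 1) * ∑ j, |y (i, j)| ^ p :=
              Finset.sum_le_sum fun i _ => hterm i
          _ = (t:ℝ) ^ (p - 1) * ∑ i, ∑ j, |y (i, j)| ^ p := by rw [← Finset.mul_sum]
          _ = (t:ℝ) ^ (p - 1) * ∑ v : Fin k × Fin t, |y v| ^ p := by
              rw [Fintype.sum_prod_type (f := fun v : Fin k × Fin t => |y v| ^ p)]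
          _ = (t:ℝ) ^ (p - 1) := by rw [hynorm, mul_one]
      have hnm : n ≤ m := by
        have hS : (0:ℝ) ≤ ∑ i, |z i| ^ p :=
          sum_nonneg fun i _ => Real.rpow_nonneg (abs_nonneg _) _
        calc n = (∑ i, |z i| ^ p) ^ (1/p) := rfl
          _ ≤ ((t:ℝ) ^ (p - 1)) ^ (1/p) :=
            Real.rpow_le_rpow hS hzb (by positivity)
          _ = m := by
            rw [← Real.rpow_mul ht0.le, hmdef]
            congr 1
            field_simp
      -- normalize z
      set x : Fin k → ℝ := fun i => n⁻¹ * z i with hxdef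
      have hx1 : lpNorm p x = 1 := by
        rw [hxdef, lpNorm_const_mul hp0 (inv_nonneg.mpr hn.le), ← hndef,
          inv_mul_cancel₀ hn.ne']
      have hxP : polyForm r (completeEdges r k) (fun _ => 1) x =
          n⁻¹ ^ r * polyForm r (completeEdges r k) (fun _ => 1) z :=
        polyForm_const_mul r _ hEK n⁻¹ z
      have hxK : polyForm r (completeEdges r k) (fun _ => 1) x ∈ KS := ⟨x, hx1, rfl⟩
      have hxle : polyForm r (completeEdges r k) (fun _ => 1) x ≤ sSup KS :=
        le_csSup hbK hxK
      have hzP : polyForm r (completeEdges r k) (fun _ => 1) z =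
          n ^ r * polyForm r (completeEdges r k) (fun _ => 1) x := by
        rw [hxP, ← mul_assoc, ← mul_pow, mul_inv_cancel₀ hn.ne', one_pow, one_mul]
      calc polyForm r (completeEdges r k) (fun _ => 1) z
          = n ^ r * polyForm r (completeEdges r k) (fun _ => 1) x := hzP
        _ ≤ n ^ r * sSup KS :=
            mul_le_mul_of_nonneg_left hxle (pow_nonneg hn.le r)
        _ ≤ m ^ r * sSup KS := by
            apply mul_le_mul_of_nonneg_right _ hKnn
            exact pow_le_pow_left₀ hn.le hnm r
        _ = c * sSup KS := by rw [hmr]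
  -- direction ≥
  have hge : c * sSup KS ≤ sSup MS := by
    have key : ∀ s ∈ KS, c * s ≤ sSup MS := by
      rintro s ⟨x, hx, rfl⟩
      set d : ℝ := (t:ℝ) ^ (-(1/p)) with hddef
      have hd0 : 0 < d := Real.rpow_pos_of_pos ht0 _
      set y : Fin k × Fin t → ℝ := fun v => d * x v.1 with hydef
      have hxnorm : ∑ i, |x i| ^ p = 1 := lpNorm_sum_eq hp0 hx
      have hy1 : lpNorm p y = 1 := by
        unfold lpNorm
        have hsum : ∑ v : Fin k × Fin t, |y v| ^ p = 1 := by
          have hterm : ∀ v : Fin k × Fin t, |y v| ^ p = d ^ p * |x v.1| ^ p := by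
            intro v
            rw [hydef]
            rw [abs_mul, abs_of_nonneg hd0.le, Real.mul_rpow hd0.le (abs_nonneg _)]
          have hdp : d ^ p = (t:ℝ)⁻¹ := by
            rw [hddef, ← Real.rpow_mul ht0.le]
            rw [show -(1/p) * p = -1 by field_simp, Real.rpow_neg_one]
          calc ∑ v : Fin k × Fin t, |y v| ^ p
              = ∑ v : Fin k × Fin t, d ^ p * |x v.1| ^ p :=
                Finset.sum_congr rfl fun v _ => hterm v
            _ = ∑ i : Fin k, ∑ j : Fin t, d ^ p * |x i| ^ p :=
                Fintype.sum_prod_type (f := fun v : Fin k × Fin t => d ^ p * |x v.1| ^ p)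
            _ = ∑ i : Fin k, (t:ℝ) * (d ^ p * |x i| ^ p) := by
                refine Finset.sum_congr rfl fun i _ => ?_
                rw [Finset.sum_const, card_univ, Fintype.card_fin, nsmul_eq_mul]
            _ = 1 := by
                rw [hdp]
                have : ∀ i : Fin k, (t:ℝ) * ((t:ℝ)⁻¹ * |x i| ^ p) = |x i| ^ p := by
                  intro i
                  rw [← mul_assoc, mul_inv_cancel₀ ht0.ne', one_mul]
                rw [Finset.sum_congr rfl fun i _ => this i, hxnorm]
        rw [hsum, Real.one_rpow]
      have hy2 : polyForm r (multiEdges r k t) (fun _ => 1) y =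
          c * polyForm r (completeEdges r k) (fun _ => 1) x := by
        rw [hPM y]
        have hz : (fun i => ∑ j : Fin t, y (i, j)) = fun i => ((t:ℝ) * d) * x i := by
          funext i
          show ∑ _j : Fin t, d * x i = (t:ℝ) * d * x i
          rw [Finset.sum_const, card_univ, Fintype.card_fin, nsmul_eq_mul, mul_assoc]
        rw [hz, polyForm_const_mul r _ hEK]
        congr 1
        have htd : (t:ℝ) * d = m := by
          rw [hddef, hmdef,
            show (1:ℝ) - 1/p = 1 + -(1/p) by ring, Real.rpow_add ht0, Real.rpow_one]
        rw [htd, hmr]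
      have : c * polyForm r (completeEdges r k) (fun _ => 1) x ∈ MS := ⟨y, hy1, hy2⟩
      exact le_csSup hbM this
    have h2 : sSup KS ≤ sSup MS / c := by
      refine csSup_le ⟨0, h0K⟩ ?_
      intro s hs
      rw [le_div_iff₀ hcpos, mul_comm]
      exact key s hs
    calc c * sSup KS ≤ c * (sSup MS / c) :=
        mul_le_mul_of_nonneg_left h2 hcpos.le
      _ = sSup MS := by field_simp
  linarith
end
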